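/- arXiv:2012.06270 — 7 statements merged into one kernel-verified Lean document; each statement's English description precedes it below -/
import Mathlib

section
/- For every even natural number d there exists a polynomial Q with integer coefficients in two variables, depending only on d, such that for all natural numbers n and all real p, the d-th central binomial moment satisfies ∑_{j=0}^{n} C(n,j) p^j (1−p)^{n−j} (j−np)^d = Q(n, p(1−p)). -/
open Polynomial Finset

noncomputable section CM

/-- the d-th central binomial moment as a polynomial in `p` (for fixed `n`). -/
def cmS (d n : ℕ) : Polynomial ℝ :=
  ∑ j ∈ range (n+1), (n.choose j : Polynomial ℝ) * X^j * (1-X)^(n-j)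
      * (C (j:ℝ) - C (n:ℝ) * X)^d

/-- invariant polynomials: inner variable = n, outer variable = σ². -/
def cmF : ℕ → Polynomial (Polynomial ℤ)
  | 0 => 1
  | 1 => 0
  | (d+2) =>
    if Even d then
      (-2) * X * cmF (d+1) + X * (1 - 4*X) * derivative (cmF (d+1))
        + ((d:ℕ)+1 : Polynomial (Polynomial ℤ)) * C X * X * cmF d
    else
      X * derivative (cmF (d+1)) + ((d:ℕ)+1 : Polynomial (Polynomial ℤ)) * C X * X * cmF d

def cmEps (d : ℕ) : Polynomial ℝ := if Even d then 1 else 1 - 2*X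

def cmPhi (n : ℕ) (P : Polynomial (Polynomial ℤ)) : Polynomial ℝ :=
  (P.map (Polynomial.aeval (n:ℝ)).toRingHom).comp (X * (1 - X))

lemma cmPhi_one (n : ℕ) : cmPhi n 1 = 1 := by simp [cmPhi]
lemma cmPhi_zero (n : ℕ) : cmPhi n 0 = 0 := by simp [cmPhi]
lemma cmPhi_mul (n : ℕ) (P Q : Polynomial (Polynomial ℤ)) :
    cmPhi n (P * Q) = cmPhi n P * cmPhi n Q := by simp [cmPhi, mul_comp]
lemma cmPhi_add (n : ℕ) (P Q : Polynomial (Polynomial ℤ)) :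
    cmPhi n (P + Q) = cmPhi n P + cmPhi n Q := by simp [cmPhi, add_comp]
lemma cmPhi_X (n : ℕ) : cmPhi n X = X * (1 - X) := by simp [cmPhi]
lemma cmPhi_CX (n : ℕ) : cmPhi n (C X) = C (n:ℝ) := by simp [cmPhi]
lemma cmPhi_natCast (n m : ℕ) :
    cmPhi n (m : Polynomial (Polynomial ℤ)) = (m : Polynomial ℝ) := by simp [cmPhi]
lemma cmPhi_neg (n : ℕ) (P) : cmPhi n (-P) = - cmPhi n P := by simp [cmPhi, neg_comp]
lemma cmPhi_sub (n : ℕ) (P Q) : cmPhi n (P - Q) = cmPhi n P - cmPhi n Q := by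
  simp [cmPhi, sub_comp]
lemma cmPhi_ofNat (n : ℕ) (m : ℕ) [m.AtLeastTwo] :
    cmPhi n (OfNat.ofNat m) = OfNat.ofNat m := by
  exact cmPhi_natCast n m

lemma cmPhi_two (n : ℕ) : cmPhi n 2 = 2 := by simp [cmPhi]
lemma cmPhi_four (n : ℕ) : cmPhi n 4 = 4 := by simp [cmPhi]

lemma cmPhi_derivative (n : ℕ) (P : Polynomial (Polynomial ℤ)) :
    derivative (cmPhi n P) = (1 - 2*X) * cmPhi n (derivative P) := by
  unfold cmPhi
  rw [derivative_comp, ← derivative_map]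
  congr 1
  rw [derivative_mul, derivative_sub, derivative_one, derivative_X]
  ring

/-- key derivative identity for the Bernstein basis term. -/
lemma cmU (n j : ℕ) (hj : j ≤ n) :
    X * (1-X) * derivative ((X:Polynomial ℝ)^j * (1-X)^(n-j)) =
    X^j * (1-X)^(n-j) * (C (j:ℝ) - C (n:ℝ) * X) := by
  have h1 : (X : Polynomial ℝ) * (C (j:ℝ) * X ^ (j-1)) = C (j:ℝ) * X ^ j := by
    cases j with
    | zero => simp
    | succ k => rw [Nat.add_sub_cancel]; ring
  have h2 : (1 - X : Polynomial ℝ) * (C ((n-j:ℕ):ℝ) * (1-X) ^ (n-j-1)) =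
      C ((n-j:ℕ):ℝ) * (1-X) ^ (n-j) := by
    cases hnj : n - j with
    | zero => simp
    | succ k => rw [Nat.add_sub_cancel]; ring
  have hcast : (C ((n-j:ℕ):ℝ) : Polynomial ℝ) = C (n:ℝ) - C (j:ℝ) := by
    rw [Nat.cast_sub hj, map_sub]
  rw [derivative_mul, derivative_X_pow, derivative_pow, derivative_sub,
    derivative_one, derivative_X]
  calc X * (1-X) * ((C (j:ℝ) * X ^ (j-1)) * (1-X)^(n-j)
        + X^j * (C ((n-j:ℕ):ℝ) * (1-X)^(n-j-1) * (0-1)))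
      = (1-X) * (X * (C (j:ℝ) * X ^ (j-1))) * (1-X)^(n-j)
        - X^j * X * ((1-X) * (C ((n-j:ℕ):ℝ) * (1-X)^(n-j-1))) := by ring
    _ = X^j * (1-X)^(n-j) * (C (j:ℝ) - C (n:ℝ) * X) := by
        rw [h1, h2, hcast]; ring

/-- the fundamental recurrence for central binomial moments. -/
lemma cmS_rec (e n : ℕ) :
    cmS (e+1) n = X * (1-X) * derivative (cmS e n)
      + C (e:ℝ) * C (n:ℝ) * (X * (1-X)) * cmS (e-1) n := by
  unfold cmS
  rw [derivative_sum, Finset.mul_sum, Finset.mul_sum, ← Finset.sum_add_distrib]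
  refine Finset.sum_congr rfl ?_
  intro j hj
  have hj' : j ≤ n := by
    have := Finset.mem_range.mp hj; omega
  have key' : X * (1-X) * (derivative ((X:Polynomial ℝ)^j) * (1-X)^(n-j)
      + X^j * derivative ((1-X:Polynomial ℝ)^(n-j)))
      = X^j * (1-X)^(n-j) * (C (j:ℝ) - C (n:ℝ) * X) := by
    rw [← derivative_mul]; exact cmU n j hj'
  rw [derivative_mul, derivative_mul, derivative_mul, derivative_natCast]
  rw [show derivative ((C (j:ℝ) - C (n:ℝ) * X)^e) =
      C (e:ℝ) * (C (j:ℝ) - C (n:ℝ) * X)^(e-1) * (-(C (n:ℝ))) by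
    rw [derivative_pow, derivative_sub, derivative_C, derivative_mul,
      derivative_C, derivative_X]; ring]
  linear_combination (-((n.choose j : Polynomial ℝ) * (C (j:ℝ) - C (n:ℝ) * X)^e)) * key'

lemma cmS_zero (n : ℕ) : cmS 0 n = 1 := by
  calc cmS 0 n
      = ∑ j ∈ range (n+1), (X:Polynomial ℝ)^j * (1-X)^(n-j) * (n.choose j : Polynomial ℝ) := by
        unfold cmS
        refine Finset.sum_congr rfl fun j hj => ?_
        simp only [pow_zero, mul_one]; ring
    _ = (X + (1 - X) : Polynomial ℝ)^n := (add_pow _ _ n).symm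
    _ = 1 := by rw [show (X + (1 - X) : Polynomial ℝ) = 1 by ring, one_pow]

lemma cmMain (d n : ℕ) : cmS d n = cmEps d * cmPhi n (cmF d) := by
  induction d using Nat.twoStepInduction with
  | zero =>
    rw [cmS_zero, show cmF 0 = 1 from rfl, cmPhi_one, cmEps, if_pos Even.zero, mul_one]
  | one =>
    have h := cmS_rec 0 n
    rw [cmS_zero] at h
    simp only [Nat.cast_zero, map_zero, zero_mul, derivative_one, mul_zero,
      add_zero, zero_add] at h
    rw [h, show cmF 1 = 0 from rfl, cmPhi_zero, mul_zero]
  | more d ih ih1 =>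
    have h := cmS_rec (d+1) n
    rw [Nat.add_sub_cancel, ih, ih1] at h
    rcases Nat.even_or_odd d with he | ho
    · -- d even, d+1 odd, d+2 even
      have he1 : ¬ Even (d+1) := by simp [Nat.even_add_one, he]
      have he2 : Even (d+2) := by rcases he with ⟨k, hk⟩; exact ⟨k+1, by omega⟩
      have hF : cmF (d+2) = (-2) * X * cmF (d+1) + X * (1 - 4*X) * derivative (cmF (d+1))
          + ((d:ℕ)+1 : Polynomial (Polynomial ℤ)) * C X * X * cmF d := by
        rw [cmF, if_pos he]
      simp only [cmEps] at h ⊢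
      rw [if_neg he1, if_pos he, one_mul] at h
      rw [h, if_pos he2, one_mul, hF]
      rw [derivative_mul, cmPhi_derivative]
      simp only [cmPhi_add, cmPhi_mul, cmPhi_neg, cmPhi_ofNat, cmPhi_X, cmPhi_CX,
        cmPhi_natCast, cmPhi_one, cmPhi_sub, cmPhi_two, cmPhi_four]
      rw [show derivative (1 - 2*X : Polynomial ℝ) = -2 by
        rw [derivative_sub, derivative_one]; simp]
      rw [map_natCast (Polynomial.C : ℝ →+* Polynomial ℝ)]
      push_cast
      ring
    · -- d odd, d+1 even, d+2 odd
      have hne : ¬ Even d := Nat.not_even_iff_odd.mpr ho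
      have he1 : Even (d+1) := Odd.add_one ho
      have he2 : ¬ Even (d+2) := fun h' => hne (by rcases h' with ⟨k, hk⟩; exact ⟨k-1, by omega⟩)
      have hF : cmF (d+2) = X * derivative (cmF (d+1))
          + ((d:ℕ)+1 : Polynomial (Polynomial ℤ)) * C X * X * cmF d := by
        rw [cmF, if_neg hne]
      simp only [cmEps] at h ⊢
      rw [if_pos he1, one_mul, if_neg hne, cmPhi_derivative] at h
      rw [h, if_neg he2, hF]
      simp only [cmPhi_add, cmPhi_mul, cmPhi_X, cmPhi_CX, cmPhi_natCast, cmPhi_one]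
      rw [map_natCast (Polynomial.C : ℝ →+* Polynomial ℝ)]
      push_cast
      ring

def cmPsi : Polynomial (Polynomial ℤ) →+* MvPolynomial (Fin 2) ℤ :=
  eval₂RingHom (eval₂RingHom MvPolynomial.C (MvPolynomial.X 0)) (MvPolynomial.X 1)

lemma cmPhi_eq (n : ℕ) (P : Polynomial (Polynomial ℤ)) :
    cmPhi n P = eval₂RingHom
      ((Polynomial.C : ℝ →+* Polynomial ℝ).comp (Polynomial.aeval (n:ℝ)).toRingHom)
      (X*(1-X)) P := by
  rw [cmPhi, Polynomial.comp, coe_eval₂RingHom, eval₂_map]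

lemma cmEval (n : ℕ) (p : ℝ) (P : Polynomial (Polynomial ℤ)) :
    eval p (cmPhi n P) = MvPolynomial.aeval ![(n:ℝ), p*(1-p)] (cmPsi P) := by
  have hhom : (evalRingHom p).comp (eval₂RingHom
        ((Polynomial.C : ℝ →+* Polynomial ℝ).comp (Polynomial.aeval (n:ℝ)).toRingHom)
        (X*(1-X)))
      = ((MvPolynomial.aeval ![(n:ℝ), p*(1-p)]).toRingHom).comp cmPsi := by
    apply Polynomial.ringHom_ext
    · intro a
      have h2 : ((evalRingHom p).comp (eval₂RingHom
          ((Polynomial.C : ℝ →+* Polynomial ℝ).comp (Polynomial.aeval (n:ℝ)).toRingHom)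
          (X*(1-X)))).comp (Polynomial.C : Polynomial ℤ →+* Polynomial (Polynomial ℤ))
          = (((MvPolynomial.aeval ![(n:ℝ), p*(1-p)]).toRingHom).comp cmPsi).comp
            (Polynomial.C : Polynomial ℤ →+* Polynomial (Polynomial ℤ)) := by
        apply Polynomial.ringHom_ext
        · intro z
          simp [cmPsi]
        · simp [cmPsi]
      exact RingHom.congr_fun h2 a
    · simp [cmPsi]
  have h3 := RingHom.congr_fun hhom P
  simp only [RingHom.comp_apply] at h3
  rw [cmPhi_eq]
  exact h3

lemma cmS_eval (d n : ℕ) (p : ℝ) :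
    eval p (cmS d n) = ∑ j ∈ Finset.range (n + 1),
      (n.choose j : ℝ) * p ^ j * (1 - p) ^ (n - j) * ((j : ℝ) - n * p) ^ d := by
  unfold cmS
  rw [eval_finset_sum]
  refine Finset.sum_congr rfl fun j hj => ?_
  simp

end CM

/-- for even d, the d-th central binomial moment is a polynomial
with integer coefficients in n and σ² = p(1-p). -/
theorem central_moment_even_poly (d : ℕ) (hd : Even d) :
    ∃ Q : MvPolynomial (Fin 2) ℤ, ∀ (n : ℕ) (p : ℝ),
      ∑ j ∈ Finset.range (n + 1),
          (n.choose j : ℝ) * p ^ j * (1 - p) ^ (n - j) * ((j : ℝ) - n * p) ^ d =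
      MvPolynomial.aeval ![(n : ℝ), p * (1 - p)] Q := by
  refine ⟨cmPsi (cmF d), fun n p => ?_⟩
  rw [← cmS_eval d n p, cmMain d n, cmEps, if_pos hd, one_mul]
  exact cmEval n p (cmF d)
end

section
/- For every odd natural number d there exists a polynomial Q with integer coefficients in two variables, depending only on d, such that for all natural numbers n and all real p, the d-th central binomial moment satisfies ∑_{j=0}^{n} C(n,j) p^j (1−p)^{n−j} (j−np)^d = (1−2p) · Q(n, p(1−p)). -/
open Polynomial Finset

lemma binom_sum_one (n : ℕ) (p : ℝ) :
    ∑ j ∈ range (n+1), (n.choose j : ℝ) * p ^ j * (1 - p) ^ (n - j) = 1 := by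
  have h := add_pow p (1 - p) n
  simp only [add_sub_cancel, one_pow] at h
  have h2 : ∑ j ∈ range (n+1), (n.choose j : ℝ) * p ^ j * (1 - p) ^ (n - j)
      = ∑ m ∈ range (n+1), p ^ m * (1-p) ^ (n-m) * (n.choose m : ℝ) :=
    Finset.sum_congr rfl fun j _ => by ring
  rw [h2, ← h]

lemma key_nat (n m i : ℕ) (h : m + i ≤ n) :
    n.choose (m + i) * (m + i).descFactorial m
      = n.descFactorial m * (n - m).choose i := by
  have h1 := Nat.choose_mul (n := n) (k := m + i) (s := m) (Nat.le_add_right m i)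
  have h2 : (m + i) - m = i := by omega
  rw [h2] at h1
  calc n.choose (m + i) * (m + i).descFactorial m
      = n.choose (m+i) * (Nat.factorial m * (m+i).choose m) := by
        rw [Nat.descFactorial_eq_factorial_mul_choose]
    _ = Nat.factorial m * (n.choose (m+i) * (m+i).choose m) := by ring
    _ = Nat.factorial m * (n.choose m * (n - m).choose i) := by rw [h1]
    _ = (Nat.factorial m * n.choose m) * (n-m).choose i := by ring
    _ = n.descFactorial m * (n - m).choose i := by
        rw [Nat.descFactorial_eq_factorial_mul_choose]

lemma sum_descFactorial (m n : ℕ) (p : ℝ) :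
    ∑ j ∈ range (n+1), (n.choose j : ℝ) * p ^ j * (1 - p) ^ (n - j) * (j.descFactorial m : ℝ)
      = (n.descFactorial m : ℝ) * p ^ m := by
  rcases le_or_gt m n with hmn | hmn
  · have hsub : Finset.Ico m (n+1) ⊆ range (n+1) := by
      rw [Finset.range_eq_Ico]; exact Finset.Ico_subset_Ico (Nat.zero_le _) le_rfl
    have hzero : ∀ j ∈ range (n+1), j ∉ Finset.Ico m (n+1) →
        (n.choose j : ℝ) * p ^ j * (1 - p) ^ (n - j) * (j.descFactorial m : ℝ) = 0 := by
      intro j hj1 hj2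
      simp only [Finset.mem_range] at hj1
      simp only [Finset.mem_Ico, not_and, not_lt] at hj2
      have : j < m := by by_contra hc; exact absurd (hj2 (by omega)) (by omega)
      simp [Nat.descFactorial_eq_zero_iff_lt.2 this]
    rw [← Finset.sum_subset hsub hzero, Finset.sum_Ico_eq_sum_range]
    have hlen : n + 1 - m = (n - m) + 1 := by omega
    rw [hlen]
    have hstep : ∀ i ∈ range ((n-m)+1),
        (n.choose (m+i) : ℝ) * p ^ (m+i) * (1-p) ^ (n - (m+i)) * ((m+i).descFactorial m : ℝ)
          = (n.descFactorial m : ℝ) * p ^ m *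
            (((n-m).choose i : ℝ) * p ^ i * (1-p) ^ ((n-m) - i)) := by
      intro i hi
      simp only [Finset.mem_range] at hi
      have hin : m + i ≤ n := by omega
      have hk := key_nat n m i hin
      have hcast : (n.choose (m+i) : ℝ) * ((m+i).descFactorial m : ℝ)
          = (n.descFactorial m : ℝ) * ((n-m).choose i : ℝ) := by
        exact_mod_cast congrArg (Nat.cast : ℕ → ℝ) hk
      have hsub2 : n - (m + i) = (n - m) - i := by omega
      rw [hsub2, pow_add]
      linear_combination (p ^ m * p ^ i * (1 - p) ^ ((n - m) - i)) * hcast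
    rw [Finset.sum_congr rfl hstep, ← Finset.mul_sum, binom_sum_one (n-m) p, mul_one]
  · have h0 : (n.descFactorial m : ℝ) = 0 := by
      exact_mod_cast congrArg (Nat.cast : ℕ → ℝ) (Nat.descFactorial_eq_zero_iff_lt.2 hmn)
    rw [h0, zero_mul]
    apply Finset.sum_eq_zero
    intro j hj
    simp only [Finset.mem_range] at hj
    have : j < m := by omega
    simp [Nat.descFactorial_eq_zero_iff_lt.2 this]

noncomputable def phiA (n : ℕ) : Polynomial ℤ →+* ℝ :=
  eval₂RingHom (Int.castRingHom ℝ) (n : ℝ)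

noncomputable def Phi (n : ℕ) (p : ℝ) : Polynomial (Polynomial ℤ) →+* ℝ :=
  eval₂RingHom (phiA n) p

lemma Phi_X (n : ℕ) (p : ℝ) : Phi n p X = p := by simp [Phi]

lemma Phi_C (n : ℕ) (p : ℝ) (a : Polynomial ℤ) : Phi n p (C a) = phiA n a := by simp [Phi]

lemma phiA_desc (n m : ℕ) : phiA n (descPochhammer ℤ m) = (n.descFactorial m : ℝ) := by
  rw [phiA, coe_eval₂RingHom, eval₂_eq_eval_map, descPochhammer_map,
    descPochhammer_eval_eq_descFactorial]

lemma phiA_CC (n : ℕ) (z : ℤ) : phiA n (C z) = (z : ℝ) := by simp [phiA]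

noncomputable def RM (k n : ℕ) (p : ℝ) : ℝ :=
  ∑ j ∈ range (n+1), (n.choose j : ℝ) * p ^ j * (1 - p) ^ (n - j) * (j : ℝ) ^ k

lemma raw_poly (k : ℕ) : ∃ P : Polynomial (Polynomial ℤ),
    ∀ (n : ℕ) (p : ℝ), RM k n p = Phi n p P := by
  induction k using Nat.strong_induction_on with
  | _ k ih =>
    choose F hF using fun i : Fin k => ih i i.2
    set r : Polynomial ℤ := X ^ k - descPochhammer ℤ k with hrdef
    have hrdeg : r.natDegree < k ∨ r = 0 := by
      rcases eq_or_ne r 0 with h | h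
      · exact Or.inr h
      · left
        have hdp : (descPochhammer ℤ k).degree = (k : WithBot ℕ) := by
          rw [degree_eq_natDegree (monic_descPochhammer ℤ k).ne_zero, descPochhammer_natDegree]
        have h1 : degree (X ^ k : Polynomial ℤ) = (k : WithBot ℕ) := degree_X_pow k
        have hlt : r.degree < (k : WithBot ℕ) := by
          have := degree_sub_lt (h1.trans hdp.symm) (pow_ne_zero k X_ne_zero)
            (by simp [leadingCoeff_X_pow, (monic_descPochhammer ℤ k).leadingCoeff])
          rwa [h1] at this
        exact (natDegree_lt_iff_degree_lt h).2 hlt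
    rcases Nat.eq_zero_or_pos k with hk0 | hk0
    · refine ⟨1, fun n p => ?_⟩
      subst hk0
      simpa [RM] using binom_sum_one n p
    have hklt : (r.map (Int.castRingHom ℝ)).natDegree < k := by
      rcases hrdeg with h | h
      · exact lt_of_le_of_lt (natDegree_map_le) h
      · rw [h, Polynomial.map_zero, natDegree_zero]; exact hk0
    have hpoint : ∀ j : ℕ, (j : ℝ) ^ k
        = (j.descFactorial k : ℝ) + ∑ i : Fin k, (r.coeff i : ℝ) * (j : ℝ) ^ (i : ℕ) := by
      intro j
      have hmap : (r.map (Int.castRingHom ℝ)).eval (j : ℝ)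
          = (j : ℝ) ^ k - (j.descFactorial k : ℝ) := by
        simp [hrdef, Polynomial.map_sub, Polynomial.map_pow, descPochhammer_map,
          descPochhammer_eval_eq_descFactorial]
      have h1 := eval_eq_sum_range' hklt ((j : ℕ) : ℝ)
      rw [hmap] at h1
      rw [Fin.sum_univ_eq_sum_range (fun i => (r.coeff i : ℝ) * (j : ℝ) ^ i)]
      have h2 : ∀ i ∈ range k, (r.map (Int.castRingHom ℝ)).coeff i * (j:ℝ) ^ i
          = (r.coeff i : ℝ) * (j : ℝ) ^ i := by
        intro i _; rw [coeff_map]; simp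
      rw [Finset.sum_congr rfl h2] at h1
      linarith [h1]
    refine ⟨C (descPochhammer ℤ k) * X ^ k + ∑ i : Fin k, C (C (r.coeff i)) * F i,
      fun n p => ?_⟩
    have step1 : RM k n p
        = (∑ j ∈ range (n+1),
            (n.choose j : ℝ) * p ^ j * (1-p) ^ (n-j) * (j.descFactorial k : ℝ))
          + ∑ j ∈ range (n+1), ∑ i : Fin k,
            (r.coeff (i:ℕ) : ℝ) * ((n.choose j : ℝ) * p ^ j * (1-p) ^ (n-j) * (j:ℝ) ^ (i:ℕ)) := by
      rw [RM, ← Finset.sum_add_distrib]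
      refine Finset.sum_congr rfl fun j _ => ?_
      rw [hpoint j, mul_add, Finset.mul_sum]
      congr 1
      exact Finset.sum_congr rfl fun i _ => by ring
    rw [step1, Finset.sum_comm, sum_descFactorial]
    have step2 : ∀ i : Fin k, (∑ j ∈ range (n+1),
        (r.coeff (i:ℕ) : ℝ) * ((n.choose j : ℝ) * p ^ j * (1-p) ^ (n-j) * (j:ℝ) ^ (i:ℕ)))
        = (r.coeff (i:ℕ) : ℝ) * Phi n p (F i) := by
      intro i
      rw [← Finset.mul_sum, ← RM, hF i]
    rw [Finset.sum_congr rfl (fun i _ => step2 i)]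
    simp [map_add, map_sum, map_mul, map_pow, Phi_C, Phi_X, phiA_desc, phiA_CC]

lemma phiA_X (n : ℕ) : phiA n X = (n : ℝ) := by simp [phiA]

noncomputable def CM (d n : ℕ) (p : ℝ) : ℝ :=
  ∑ j ∈ Finset.range (n + 1),
      (n.choose j : ℝ) * p ^ j * (1 - p) ^ (n - j) * ((j : ℝ) - n * p) ^ d

lemma cm_poly (d : ℕ) : ∃ P : Polynomial (Polynomial ℤ),
    ∀ (n : ℕ) (p : ℝ), CM d n p = Phi n p P := by
  choose F hF using fun k : Fin (d+1) => raw_poly k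
  refine ⟨∑ k : Fin (d+1), Polynomial.C (Polynomial.C ((-1)^((k:ℕ)+d) * (d.choose k : ℤ)))
      * Polynomial.C (X ^ (d - (k:ℕ))) * X ^ (d - (k:ℕ)) * F k, fun n p => ?_⟩
  have hexp : ∀ j : ℕ, ((j:ℝ) - n * p) ^ d
      = ∑ k : Fin (d+1), (-1:ℝ)^((k:ℕ)+d) * (d.choose k : ℝ) * (n:ℝ)^(d-(k:ℕ))
          * p^(d-(k:ℕ)) * (j:ℝ)^(k:ℕ) := by
    intro j
    rw [sub_pow, Fin.sum_univ_eq_sum_range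
      (fun k => (-1:ℝ)^(k+d) * (d.choose k : ℝ) * (n:ℝ)^(d-k) * p^(d-k) * (j:ℝ)^k)]
    refine Finset.sum_congr rfl fun k _ => ?_
    rw [mul_pow]
    ring
  have step1 : CM d n p = ∑ k : Fin (d+1),
      (-1:ℝ)^((k:ℕ)+d) * (d.choose k : ℝ) * (n:ℝ)^(d-(k:ℕ)) * p^(d-(k:ℕ)) * RM (k:ℕ) n p := by
    rw [CM]
    have : ∀ j ∈ range (n+1),
        (n.choose j : ℝ) * p ^ j * (1 - p) ^ (n - j) * ((j : ℝ) - n * p) ^ d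
        = ∑ k : Fin (d+1), (-1:ℝ)^((k:ℕ)+d) * (d.choose k : ℝ) * (n:ℝ)^(d-(k:ℕ))
            * p^(d-(k:ℕ)) * ((n.choose j : ℝ) * p ^ j * (1 - p) ^ (n - j) * (j:ℝ)^(k:ℕ)) := by
      intro j _
      rw [hexp j, Finset.mul_sum]
      exact Finset.sum_congr rfl fun k _ => by ring
    rw [Finset.sum_congr rfl this, Finset.sum_comm]
    exact Finset.sum_congr rfl fun k _ => by rw [← Finset.mul_sum, RM]
  rw [step1, map_sum]
  refine Finset.sum_congr rfl fun k _ => ?_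
  rw [hF k]
  simp only [map_mul, map_pow, Phi_C, Phi_X, phiA_CC, phiA_X, map_pow]
  push_cast
  ring

lemma Phi_apply (n : ℕ) (p : ℝ) (Q : Polynomial (Polynomial ℤ)) :
    Phi n p Q = (Q.map (phiA n)).eval p := by
  rw [Phi, coe_eval₂RingHom, eval₂_eq_eval_map]

lemma Phi_inj (Q : Polynomial (Polynomial ℤ)) (h : ∀ (n : ℕ) (p : ℝ), Phi n p Q = 0) :
    Q = 0 := by
  have hcoeff : ∀ (i : ℕ) (n : ℕ), phiA n (Q.coeff i) = 0 := by
    intro i n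
    have hmapzero : Q.map (phiA n) = 0 := by
      apply Polynomial.funext
      intro x
      rw [eval_zero, ← Phi_apply]
      exact h n x
    have := congrArg (fun q => Polynomial.coeff q i) hmapzero
    simpa [coeff_map] using this
  ext i m
  have hg : ((Q.coeff i).map (Int.castRingHom ℝ)) = 0 := by
    apply Polynomial.eq_zero_of_infinite_isRoot
    apply Set.infinite_of_injective_forall_mem
      (f := fun n : ℕ => (n : ℝ)) Nat.cast_injective
    intro n
    have : ((Q.coeff i).map (Int.castRingHom ℝ)).eval (n : ℝ) = 0 := by
      rw [← eval₂_eq_eval_map]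
      exact hcoeff i n
    exact this
  have hz : Q.coeff i = 0 := Polynomial.map_injective (Int.castRingHom ℝ)
    Int.cast_injective (hg.trans (Polynomial.map_zero _).symm)
  simp [hz]

lemma cm_reflect (d : ℕ) (hd : Odd d) (n : ℕ) (p : ℝ) :
    CM d n (1 - p) = - CM d n p := by
  have hrefl := Finset.sum_range_reflect
    (fun j => (n.choose j : ℝ) * (1-p) ^ j * (1 - (1-p)) ^ (n - j) * ((j:ℝ) - n * (1-p)) ^ d)
    (n+1)
  simp only [CM]
  rw [← hrefl, ← Finset.sum_neg_distrib]
  refine Finset.sum_congr rfl fun j hj => ?_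
  simp only [Finset.mem_range] at hj
  have hjn : j ≤ n := by omega
  have h1 : n + 1 - 1 - j = n - j := by omega
  have h2 : n - (n - j) = j := by omega
  have h3 : n.choose (n - j) = n.choose j := Nat.choose_symm hjn
  have h4 : ((n - j : ℕ) : ℝ) = (n : ℝ) - j := by
    rw [Nat.cast_sub hjn]
  rw [h1, h2, h3, h4, sub_sub_cancel]
  have h5 : ((n:ℝ) - j - n * (1 - p)) = -((j:ℝ) - n * p) := by ring
  rw [h5, hd.neg_pow]
  ring

lemma P_antisym (d : ℕ) (hd : Odd d) (P : Polynomial (Polynomial ℤ))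
    (hP : ∀ (n : ℕ) (p : ℝ), CM d n p = Phi n p P) :
    P.comp (1 - X) = - P := by
  have h0 : P.comp (1 - X) + P = 0 := by
    apply Phi_inj
    intro n p
    have hcomp : Phi n p (P.comp (1 - X)) = Phi n (1-p) P := by
      rw [Phi, coe_eval₂RingHom, eval₂_comp]
      congr 1
      simp [Phi]
    rw [map_add, hcomp, ← hP, ← hP, cm_reflect d hd]
    ring
  linear_combination h0

lemma rep_pow (i : ℕ) : ∃ u v : Polynomial (Polynomial ℤ),
    (X : Polynomial (Polynomial ℤ)) ^ i = u.comp (X - X^2) + X * v.comp (X - X^2) := by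
  induction i with
  | zero => exact ⟨1, 0, by simp⟩
  | succ i ih =>
    obtain ⟨u, v, huv⟩ := ih
    refine ⟨-(X * v), u + v, ?_⟩
    rw [pow_succ, huv]
    simp only [neg_comp, mul_comp, add_comp, X_comp]
    ring

lemma rep (f : Polynomial (Polynomial ℤ)) : ∃ u v : Polynomial (Polynomial ℤ),
    f = u.comp (X - X^2) + X * v.comp (X - X^2) := by
  induction f using Polynomial.induction_on' with
  | add p q hp hq =>
    obtain ⟨u1, v1, h1⟩ := hp
    obtain ⟨u2, v2, h2⟩ := hq
    exact ⟨u1 + u2, v1 + v2, by rw [h1, h2]; simp only [add_comp]; ring⟩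
  | monomial i a =>
    obtain ⟨u, v, huv⟩ := rep_pow i
    refine ⟨C a * u, C a * v, ?_⟩
    rw [← C_mul_X_pow_eq_monomial, huv]
    simp only [mul_comp, C_comp]
    ring

lemma comp_t_inj (u : Polynomial (Polynomial ℤ))
    (h : u.comp (X - X^2) = 0) : u = 0 := by
  rcases comp_eq_zero_iff.1 h with h1 | ⟨-, h2⟩
  · exact h1
  · exfalso
    have := congrArg (fun q => Polynomial.coeff q 1) h2
    simp [coeff_X, coeff_C] at this

lemma factor (f : Polynomial (Polynomial ℤ)) (hf : f.comp (1 - X) = -f) :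
    ∃ u : Polynomial (Polynomial ℤ), f = (1 - 2 * X) * u.comp (X - X^2) := by
  obtain ⟨u, v, huv⟩ := rep f
  have ht : ((X - X^2 : Polynomial (Polynomial ℤ))).comp (1 - X) = X - X^2 := by
    simp only [sub_comp, pow_comp, X_comp, one_comp]
    ring
  have hc : f.comp (1 - X)
      = u.comp (X - X^2) + (1 - X) * v.comp (X - X^2) := by
    rw [huv, add_comp, mul_comp, X_comp, comp_assoc, comp_assoc, ht]
  have hkey : (2 * u + v).comp (X - X^2) = 0 := by
    rw [add_comp, mul_comp]
    have h2c : (2 : Polynomial (Polynomial ℤ)).comp (X - X^2) = 2 := by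
      simp
    rw [h2c]
    have := hf
    rw [hc, huv] at this
    linear_combination this
  have hv : v = -(2 * u) := by
    have h0 := comp_t_inj _ hkey
    linear_combination h0
  refine ⟨u, ?_⟩
  rw [huv, hv]
  simp only [neg_comp, mul_comp]
  have h2c : (2 : Polynomial (Polynomial ℤ)).comp (X - X^2) = 2 := by simp
  rw [h2c]
  ring

/-- for odd d, the d-th central binomial moment equals (1-2p)
times a polynomial with integer coefficients in n and σ² = p(1-p). -/
theorem central_moment_odd_poly (d : ℕ) (hd : Odd d) :
    ∃ Q : MvPolynomial (Fin 2) ℤ, ∀ (n : ℕ) (p : ℝ),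
      ∑ j ∈ Finset.range (n + 1),
          (n.choose j : ℝ) * p ^ j * (1 - p) ^ (n - j) * ((j : ℝ) - n * p) ^ d =
      (1 - 2 * p) * MvPolynomial.aeval ![(n : ℝ), p * (1 - p)] Q := by
  obtain ⟨P, hP⟩ := cm_poly d
  obtain ⟨u, hu⟩ := factor P (P_antisym d hd P hP)
  refine ⟨Polynomial.eval₂ (Polynomial.eval₂RingHom MvPolynomial.C (MvPolynomial.X 0))
    (MvPolynomial.X 1) u, fun n p => ?_⟩
  show CM d n p = _
  rw [hP n p, hu, map_mul]
  have h1 : Phi n p (1 - 2 * X) = 1 - 2 * p := by simp [Phi]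
  have h2 : Phi n p (u.comp (X - X^2)) = Polynomial.eval₂ (phiA n) (p * (1 - p)) u := by
    rw [Phi, coe_eval₂RingHom, eval₂_comp]
    have : Polynomial.eval₂ (phiA n) p (X - X ^ 2) = p * (1 - p) := by
      simp; ring
    rw [this]
  rw [h1, h2]
  set gR : MvPolynomial (Fin 2) ℤ →+* ℝ :=
    (MvPolynomial.aeval ![(n : ℝ), p * (1 - p)] : MvPolynomial (Fin 2) ℤ →ₐ[ℤ] ℝ).toRingHom
    with hgR
  have h3 : gR (Polynomial.eval₂ (Polynomial.eval₂RingHom MvPolynomial.C (MvPolynomial.X 0))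
      (MvPolynomial.X 1) u)
      = Polynomial.eval₂ (gR.comp (Polynomial.eval₂RingHom MvPolynomial.C (MvPolynomial.X 0)))
        (gR (MvPolynomial.X 1)) u := hom_eval₂ _ _ _ _
  have h4 : gR.comp (Polynomial.eval₂RingHom MvPolynomial.C (MvPolynomial.X 0)) = phiA n := by
    apply Polynomial.ringHom_ext
    · intro a
      simp [hgR, phiA]
    · simp [hgR, phiA, Matrix.cons_val_zero]
  have h5 : gR (MvPolynomial.X 1) = p * (1 - p) := by
    simp [hgR]
  have h6 : MvPolynomial.aeval ![(n : ℝ), p * (1 - p)]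
      (Polynomial.eval₂ (Polynomial.eval₂RingHom MvPolynomial.C (MvPolynomial.X 0))
        (MvPolynomial.X 1) u)
      = Polynomial.eval₂ (phiA n) (p * (1 - p)) u := by
    rw [show (MvPolynomial.aeval ![(n : ℝ), p * (1 - p)]
        (Polynomial.eval₂ (Polynomial.eval₂RingHom MvPolynomial.C (MvPolynomial.X 0))
          (MvPolynomial.X 1) u)) = gR _ from rfl, h3, h4, h5]
  rw [h6]
end

section
/- For every natural number n, every real p with q = 1−p, and every natural number d ≥ 1, the d-th central binomial moment admits the expansion ∑_{j=0}^{n} C(n,j) p^j q^{n−j} (j−np)^d = ∑_{k=1}^{⌊d/2⌋} C(n,k) (pq)^k · ∑_{(d_1,…,d_k), each d_i ≥ 2, d_1+⋯+d_k = d} C(d; d_1,…,d_k) · ∏_{i=1}^{k} (q^{d_i−1} − (−p)^{d_i−1}). -/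
namespace CMse

noncomputable def A (p q : ℝ) (k t : ℕ) : ℝ :=
  ∑ f ∈ (Finset.Nat.antidiagonalTuple k t).filter (fun f => ∀ i, 2 ≤ f i),
    (Nat.multinomial Finset.univ f : ℝ) * ∏ i, (q ^ (f i - 1) - (-p) ^ (f i - 1))

noncomputable def Rr (p q : ℝ) (n d : ℕ) : ℝ :=
  ∑ k ∈ Finset.Icc 1 (d / 2), (n.choose k : ℝ) * (p * q) ^ k * A p q k d

noncomputable def Sf (p q : ℝ) (n d : ℕ) : ℝ := if d = 0 then 1 else Rr p q n d

noncomputable def L (p q : ℝ) (n d : ℕ) : ℝ :=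
  ∑ j ∈ Finset.range (n + 1), (n.choose j : ℝ) * p ^ j * q ^ (n - j) * ((j : ℝ) - n * p) ^ d

noncomputable def mom (p q : ℝ) (j : ℕ) : ℝ := p * q ^ j + q * (-p) ^ j

lemma mom_eq (p q : ℝ) {j : ℕ} (hj : 1 ≤ j) :
    mom p q j = p * q * (q ^ (j - 1) - (-p) ^ (j - 1)) := by
  obtain ⟨j, rfl⟩ := Nat.exists_eq_add_of_le hj
  simp only [mom, Nat.add_sub_cancel_left]
  rw [pow_add, pow_add]
  ring

lemma A_zero (p q : ℝ) (t : ℕ) : A p q 0 t = if t = 0 then 1 else 0 := by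
  rcases Nat.eq_zero_or_pos t with rfl | ht
  · simp [A, Finset.Nat.antidiagonalTuple_zero_zero]
  · rw [if_neg ht.ne']
    have : Finset.Nat.antidiagonalTuple 0 t = ∅ := by
      obtain ⟨t, rfl⟩ := Nat.exists_eq_add_of_le ht
      rw [Nat.add_comm]
      exact Finset.Nat.antidiagonalTuple_zero_succ t
    simp [A, this]

lemma A_eq_zero (p q : ℝ) {k t : ℕ} (h : t < 2 * k) : A p q k t = 0 := by
  rw [A, Finset.sum_eq_zero]
  intro f hf
  rw [Finset.mem_filter, Finset.Nat.mem_antidiagonalTuple] at hf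
  exfalso
  have : 2 * k ≤ ∑ i, f i := by
    calc 2 * k = ∑ _i : Fin k, 2 := by simp [mul_comm]
    _ ≤ ∑ i, f i := Finset.sum_le_sum fun i _ => hf.2 i
  omega

lemma multinomial_fin_cons (k m : ℕ) (f : Fin k → ℕ) :
    Nat.multinomial Finset.univ (Fin.cons m f) =
      (m + ∑ i, f i).choose m * Nat.multinomial Finset.univ f := by
  have hprod : (∏ i : Fin (k+1), Nat.factorial ((Fin.cons m f : Fin (k+1) → ℕ) i)) =
      Nat.factorial m * ∏ i : Fin k, Nat.factorial (f i) := by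
    rw [Fin.prod_univ_succ]; simp
  have hsum : (∑ i : Fin (k+1), Fin.cons m f i) = m + ∑ i, f i := by
    rw [Fin.sum_univ_succ]; simp
  have h1 := Nat.multinomial_spec Finset.univ (Fin.cons m f)
  rw [hprod, hsum] at h1
  have h2 := Nat.multinomial_spec Finset.univ f
  have key : Nat.factorial m * (∏ i : Fin k, Nat.factorial (f i)) *
      ((m + ∑ i, f i).choose m * Nat.multinomial Finset.univ f) = Nat.factorial (m + ∑ i, f i) := by
    rw [show Nat.factorial m * (∏ i : Fin k, Nat.factorial (f i)) *
      ((m + ∑ i, f i).choose m * Nat.multinomial Finset.univ f)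
      = (m + ∑ i, f i).choose m * Nat.factorial m *
        ((∏ i : Fin k, Nat.factorial (f i)) * Nat.multinomial Finset.univ f)
      by ring, h2]
    have := Nat.add_choose_mul_factorial_mul_factorial m (∑ i, f i)
    rw [Nat.choose_symm_add]
    linarith [this]
  have hpos : 0 < Nat.factorial m * ∏ i : Fin k, Nat.factorial (f i) := by positivity
  exact Nat.eq_of_mul_eq_mul_left hpos (h1.trans key.symm)

lemma A_succ (p q : ℝ) (k t : ℕ) :
    A p q (k + 1) t =
      ∑ m ∈ Finset.Icc 2 t, (t.choose m : ℝ) * (q ^ (m - 1) - (-p) ^ (m - 1)) * A p q k (t - m) := by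
  simp only [A, Finset.mul_sum]
  rw [Finset.sum_sigma']
  refine Finset.sum_nbij' (fun f => ⟨f 0, Fin.tail f⟩)
    (fun x => Fin.cons x.1 x.2) ?_ ?_ ?_ ?_ ?_
  · intro f hf
    rw [Finset.mem_filter, Finset.Nat.mem_antidiagonalTuple] at hf
    obtain ⟨hsum, h2⟩ := hf
    rw [Fin.sum_univ_succ] at hsum
    have h0 : 2 ≤ f 0 := h2 0
    rw [Finset.mem_sigma]
    constructor
    · have hle : f 0 ≤ t := by
        have := Nat.le_add_right (f 0) (∑ i : Fin k, f i.succ)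
        omega
      exact Finset.mem_Icc.2 ⟨h0, hle⟩
    · rw [Finset.mem_filter, Finset.Nat.mem_antidiagonalTuple]
      constructor
      · show ∑ i : Fin k, f i.succ = t - f 0
        omega
      · intro i; exact h2 i.succ
  · intro x hx
    rw [Finset.mem_sigma, Finset.mem_filter, Finset.Nat.mem_antidiagonalTuple] at hx
    obtain ⟨hm, hsum, h2⟩ := hx
    rw [Finset.mem_Icc] at hm
    rw [Finset.mem_filter, Finset.Nat.mem_antidiagonalTuple]
    constructor
    · rw [Fin.sum_univ_succ]
      simp only [Fin.cons_zero, Fin.cons_succ]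
      omega
    · intro i
      refine Fin.cases ?_ ?_ i
      · simpa using hm.1
      · intro j; simpa using h2 j
  · intro f _; exact Fin.cons_self_tail f
  · intro x _; simp [Fin.tail_cons]
  · intro f hf
    rw [Finset.mem_filter, Finset.Nat.mem_antidiagonalTuple] at hf
    obtain ⟨hsum, h2⟩ := hf
    have hc : f = Fin.cons (f 0) (Fin.tail f) := (Fin.cons_self_tail f).symm
    rw [hc, multinomial_fin_cons]
    rw [← hc]
    have hsum' : f 0 + ∑ i, Fin.tail f i = t := by
      rw [← hsum, Fin.sum_univ_succ]; rfl
    have hchoose : (f 0 + ∑ i, Fin.tail f i).choose (f 0) = t.choose (f 0) := by rw [hsum']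
    rw [hchoose]
    rw [Fin.prod_univ_succ]
    have : (fun i => Fin.tail f i) = fun i : Fin k => f i.succ := rfl
    push_cast
    simp only [Fin.tail]
    ring

lemma L_succ (p q : ℝ) (hq : q = 1 - p) (n d : ℕ) :
    L p q (n + 1) d = ∑ t ∈ Finset.range (d + 1),
      (d.choose t : ℝ) * L p q n t * mom p q (d - t) := by
  have expand : ∀ x y : ℝ, (x + y) ^ d
      = ∑ t ∈ Finset.range (d + 1), x ^ t * y ^ (d - t) * (d.choose t : ℝ) :=
    fun x y => add_pow x y d
  have pieceA : ∑ i ∈ Finset.range (n + 1),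
      (n.choose i : ℝ) * p ^ (i + 1) * q ^ (n - i) * (((i : ℝ) + 1) - ((n : ℝ) + 1) * p) ^ d
      = ∑ t ∈ Finset.range (d + 1), (d.choose t : ℝ) * L p q n t * (p * q ^ (d - t)) := by
    have h1 : ∀ i ∈ Finset.range (n + 1),
        (n.choose i : ℝ) * p ^ (i + 1) * q ^ (n - i) * (((i : ℝ) + 1) - ((n : ℝ) + 1) * p) ^ d
        = ∑ t ∈ Finset.range (d + 1),
            (d.choose t : ℝ) * ((n.choose i : ℝ) * p ^ i * q ^ (n - i) * ((i : ℝ) - n * p) ^ t)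
              * (p * q ^ (d - t)) := by
      intro i _
      have hb : ((i : ℝ) + 1) - ((n : ℝ) + 1) * p = ((i : ℝ) - n * p) + q := by rw [hq]; ring
      rw [hb, expand, Finset.mul_sum]
      exact Finset.sum_congr rfl fun t _ => by ring
    rw [Finset.sum_congr rfl h1, Finset.sum_comm]
    refine Finset.sum_congr rfl fun t _ => ?_
    simp only [L, Finset.mul_sum, Finset.sum_mul]
  have pieceB : ∑ j ∈ Finset.range (n + 1),
      (n.choose j : ℝ) * p ^ j * q ^ ((n - j) + 1) * ((j : ℝ) - ((n : ℝ) + 1) * p) ^ d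
      = ∑ t ∈ Finset.range (d + 1), (d.choose t : ℝ) * L p q n t * (q * (-p) ^ (d - t)) := by
    have h1 : ∀ j ∈ Finset.range (n + 1),
        (n.choose j : ℝ) * p ^ j * q ^ ((n - j) + 1) * ((j : ℝ) - ((n : ℝ) + 1) * p) ^ d
        = ∑ t ∈ Finset.range (d + 1),
            (d.choose t : ℝ) * ((n.choose j : ℝ) * p ^ j * q ^ (n - j) * ((j : ℝ) - n * p) ^ t)
              * (q * (-p) ^ (d - t)) := by
      intro j _
      have hb : (j : ℝ) - ((n : ℝ) + 1) * p = ((j : ℝ) - n * p) + (-p) := by ring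
      rw [hb, expand, Finset.mul_sum]
      exact Finset.sum_congr rfl fun t _ => by rw [pow_succ]; ring
    rw [Finset.sum_congr rfl h1, Finset.sum_comm]
    refine Finset.sum_congr rfl fun t _ => ?_
    simp only [L, Finset.mul_sum, Finset.sum_mul]
  conv_lhs => rw [L]
  rw [Finset.sum_range_succ']
  have split : ∀ i ∈ Finset.range (n + 1),
      (((n+1).choose (i+1) : ℝ)) * p ^ (i+1) * q ^ (n + 1 - (i+1)) * (((i+1 : ℕ) : ℝ) - ((n+1 : ℕ) : ℝ) * p) ^ d
      = (n.choose i : ℝ) * p ^ (i + 1) * q ^ (n - i) * (((i : ℝ) + 1) - ((n : ℝ) + 1) * p) ^ d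
        + (n.choose (i+1) : ℝ) * p ^ (i + 1) * q ^ (n - i) * (((i : ℝ) + 1) - ((n : ℝ) + 1) * p) ^ d := by
    intro i hi
    have h2 : n + 1 - (i + 1) = n - i := by omega
    rw [h2, Nat.choose_succ_succ]
    push_cast
    ring
  rw [Finset.sum_congr rfl split, Finset.sum_add_distrib]
  have hB : (∑ i ∈ Finset.range (n + 1),
        (n.choose (i+1) : ℝ) * p ^ (i + 1) * q ^ (n - i) * (((i : ℝ) + 1) - ((n : ℝ) + 1) * p) ^ d)
      + (((n+1).choose 0 : ℝ)) * p ^ 0 * q ^ (n + 1 - 0) * (((0 : ℕ) : ℝ) - ((n+1 : ℕ) : ℝ) * p) ^ d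
      = ∑ j ∈ Finset.range (n + 1),
        (n.choose j : ℝ) * p ^ j * q ^ ((n - j) + 1) * ((j : ℝ) - ((n : ℝ) + 1) * p) ^ d := by
    have hlast : (n.choose (n+1) : ℝ) * p ^ (n + 1) * q ^ (n - n) * (((n : ℝ) + 1) - ((n : ℝ) + 1) * p) ^ d = 0 := by
      simp [Nat.choose_succ_self]
    rw [Finset.sum_range_succ, hlast, add_zero]
    rw [Finset.sum_range_succ'
      (fun j => (n.choose j : ℝ) * p ^ j * q ^ ((n - j) + 1) * ((j : ℝ) - ((n : ℝ) + 1) * p) ^ d) n]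
    congr 1
    · refine Finset.sum_congr rfl fun i hi => ?_
      rw [Finset.mem_range] at hi
      have h3 : (n - (i + 1)) + 1 = n - i := by omega
      simp only [h3]
      push_cast
      ring
    · simp only [Nat.choose_zero_right, Nat.sub_zero, Nat.cast_zero]
      push_cast
      ring
  rw [add_assoc, hB, pieceA, pieceB, ← Finset.sum_add_distrib]
  refine Finset.sum_congr rfl fun t _ => ?_
  rw [mom]
  ring

lemma Sf_eq_range (p q : ℝ) (n t K : ℕ) (hK : t / 2 < K) :
    Sf p q n t = ∑ k ∈ Finset.range K, (n.choose k : ℝ) * (p * q) ^ k * A p q k t := by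
  rcases Nat.eq_zero_or_pos t with rfl | ht
  · rw [Sf, if_pos rfl]
    obtain ⟨K, rfl⟩ := Nat.exists_eq_add_of_le hK
    rw [Nat.zero_div] at *
    rw [Nat.add_comm, Finset.sum_range_succ']
    have : ∑ i ∈ Finset.range K, (n.choose (i+1) : ℝ) * (p * q) ^ (i+1) * A p q (i+1) 0 = 0 := by
      refine Finset.sum_eq_zero fun i _ => ?_
      rw [A_eq_zero p q (by omega)]
      ring
    rw [this, zero_add, A_zero]
    simp
  · rw [Sf, if_neg ht.ne', Rr]
    refine Finset.sum_subset ?_ ?_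
    · intro k hk
      rw [Finset.mem_Icc] at hk
      rw [Finset.mem_range]
      omega
    · intro k _ hk
      rw [Finset.mem_Icc] at hk
      push_neg at hk
      rcases Nat.eq_zero_or_pos k with rfl | hk1
      · rw [A_zero, if_neg ht.ne']; ring
      · rw [A_eq_zero p q (by have := hk hk1; omega)]; ring

lemma Rr_diff (p q : ℝ) (n d : ℕ) (hd : d ≠ 0) :
    Rr p q (n + 1) d = Rr p q n d +
      ∑ t ∈ Finset.range d, (d.choose t : ℝ) * Sf p q n t * mom p q (d - t) := by
  have h1 : Rr p q (n+1) d = Rr p q n d +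
      ∑ k ∈ Finset.Icc 1 (d / 2), (n.choose (k-1) : ℝ) * (p*q) ^ k * A p q k d := by
    rw [Rr, Rr, ← Finset.sum_add_distrib]
    refine Finset.sum_congr rfl fun k hk => ?_
    rw [Finset.mem_Icc] at hk
    obtain ⟨k, rfl⟩ := Nat.exists_eq_add_of_le hk.1
    rw [Nat.add_comm 1 k, Nat.choose_succ_succ, Nat.add_sub_cancel]
    push_cast
    ring
  rw [h1]
  congr 1
  -- reindex over k' with k = k'+1
  rw [show Finset.Icc 1 (d/2) = Finset.Ico 1 (d/2 + 1) by rw [Finset.Ico_add_one_right_eq_Icc],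
    Finset.sum_Ico_eq_sum_range]
  simp only [Nat.add_sub_cancel]
  have h2 : ∀ k ∈ Finset.range (d/2),
      (n.choose ((1 + k) - 1) : ℝ) * (p*q) ^ (1 + k) * A p q (1 + k) d
      = ∑ m ∈ Finset.Icc 1 d, (n.choose k : ℝ) * (p*q) ^ (k+1) *
          ((d.choose m : ℝ) * (q ^ (m-1) - (-p) ^ (m-1)) * A p q k (d - m)) := by
    intro k _
    rw [Nat.add_comm 1 k, Nat.add_sub_cancel, A_succ, Finset.mul_sum]
    have hext : ∑ m ∈ Finset.Icc 2 d, (n.choose k : ℝ) * (p*q) ^ (k+1) *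
          ((d.choose m : ℝ) * (q ^ (m-1) - (-p) ^ (m-1)) * A p q k (d - m))
        = ∑ m ∈ Finset.Icc 1 d, (n.choose k : ℝ) * (p*q) ^ (k+1) *
          ((d.choose m : ℝ) * (q ^ (m-1) - (-p) ^ (m-1)) * A p q k (d - m)) := by
      refine Finset.sum_subset (Finset.Icc_subset_Icc_left (by omega)) fun m hm hm' => ?_
      have hm1 : m = 1 := by
        rw [Finset.mem_Icc] at hm
        rw [Finset.mem_Icc] at hm'
        omega
      subst hm1
      norm_num
    rw [← hext]
  rw [Finset.sum_congr rfl h2, Finset.sum_comm]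
  have reflect : ∑ t ∈ Finset.range d, (d.choose t : ℝ) * Sf p q n t * mom p q (d - t)
      = ∑ m ∈ Finset.Icc 1 d, (d.choose (d - m) : ℝ) * Sf p q n (d - m) * mom p q m := by
    refine Finset.sum_nbij' (fun t => d - t) (fun m => d - m) ?_ ?_ ?_ ?_ ?_
    · intro t ht
      simp only [Finset.mem_range] at ht
      simp only [Finset.mem_Icc]
      omega
    · intro m hm
      simp only [Finset.mem_Icc] at hm
      simp only [Finset.mem_range]
      omega
    · intro t ht
      simp only [Finset.mem_range] at ht
      omega
    · intro m hm
      simp only [Finset.mem_Icc] at hm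
      omega
    · intro t ht
      simp only [Finset.mem_range] at ht
      rw [show d - (d - t) = t by omega]
  rw [reflect]
  refine Finset.sum_congr rfl fun m hm => ?_
  rw [Finset.mem_Icc] at hm
  rw [mom_eq p q hm.1]
  by_cases hm2 : m = 1
  · subst hm2
    simp
  · have h2m : 2 ≤ m := by omega
    rw [Sf_eq_range p q n (d - m) (d/2) (by omega), Nat.choose_symm hm.2,
      Finset.mul_sum, Finset.sum_mul]
    refine Finset.sum_congr rfl fun k _ => ?_
    rw [pow_succ]
    ring

lemma Sf_succ (p q : ℝ) (hq : q = 1 - p) (n d : ℕ) :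
    Sf p q (n + 1) d = ∑ t ∈ Finset.range (d + 1),
      (d.choose t : ℝ) * Sf p q n t * mom p q (d - t) := by
  have hmom0 : mom p q 0 = 1 := by rw [mom, hq]; ring
  rcases Nat.eq_zero_or_pos d with rfl | hd
  · rw [Sf, if_pos rfl]
    simp [Sf, hmom0]
  · rw [Finset.sum_range_succ, Nat.sub_self, hmom0, Nat.choose_self]
    rw [Sf, if_neg hd.ne', Sf, if_neg hd.ne']
    rw [Rr_diff p q n d hd.ne']
    push_cast
    ring

lemma L_eq_Sf (p q : ℝ) (hq : q = 1 - p) : ∀ n d, L p q n d = Sf p q n d := by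
  intro n
  induction n with
  | zero =>
    intro d
    rw [L, Sf]
    rcases Nat.eq_zero_or_pos d with rfl | hd
    · norm_num
    · rw [if_neg hd.ne', Rr]
      have : ∀ k ∈ Finset.Icc 1 (d/2), ((0:ℕ).choose k : ℝ) * (p * q) ^ k * A p q k d = 0 := by
        intro k hk
        rw [Finset.mem_Icc] at hk
        rw [Nat.choose_eq_zero_of_lt (by omega)]
        norm_num
      rw [Finset.sum_congr rfl this, Finset.sum_const, smul_zero]
      norm_num
      exact fun h => absurd h hd.ne'
  | succ n ih =>
    intro d
    rw [L_succ p q hq, Sf_succ p q hq]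
    exact Finset.sum_congr rfl fun t _ => by rw [ih t]

end CMse

/-- stable expansion of the d-th central binomial moment as a sum
over k = 1..⌊d/2⌋ and ordered tuples of parts ≥ 2 summing to d. -/
theorem central_moment_stable_expansion (n : ℕ) (p q : ℝ) (hq : q = 1 - p)
    (d : ℕ) (hd : 1 ≤ d) :
    ∑ j ∈ Finset.range (n + 1),
        (n.choose j : ℝ) * p ^ j * q ^ (n - j) * ((j : ℝ) - n * p) ^ d =
    ∑ k ∈ Finset.Icc 1 (d / 2),
      (n.choose k : ℝ) * (p * q) ^ k *
        ∑ f ∈ (Finset.Nat.antidiagonalTuple k d).filter (fun f => ∀ i, 2 ≤ f i),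
          (Nat.multinomial Finset.univ f : ℝ) *
            ∏ i, (q ^ (f i - 1) - (-p) ^ (f i - 1)) := by
  have h := CMse.L_eq_Sf p q hq n d
  rw [CMse.Sf, if_neg (by omega : d ≠ 0)] at h
  exact h
end

section
/- For every natural number n, every real p with 0 ≤ p ≤ 1/2 and q = 1−p, and every natural number d ≥ 2, the d-th central binomial moment is bounded above by ∑_{j=0}^{n} C(n,j) p^j q^{n−j} (j−np)^d ≤ ∑_{k=1}^{⌊d/2⌋} C(n,k) (pq)^k · k^d. -/
open Finset

namespace CMUB

/-- multiplicity of `i` in the function `f`. -/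
def cnt {n d : ℕ} (f : Fin d → Fin n) (i : Fin n) : ℕ :=
  (univ.filter fun t => f t = i).card

/-- the `m`-th moment of a centered Bernoulli(p) variable. -/
noncomputable def mu (p : ℝ) (m : ℕ) : ℝ := p * (1 - p) ^ m + (1 - p) * (-p) ^ m

lemma mu_zero (p : ℝ) : mu p 0 = 1 := by simp [mu]

lemma mu_one (p : ℝ) : mu p 1 = 0 := by simp [mu]; ring

lemma neg_pow_le {p : ℝ} (hp0 : 0 ≤ p) (m : ℕ) : -(p ^ m) ≤ (-p) ^ m ∧ (-p) ^ m ≤ p ^ m := by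
  have : |(-p) ^ m| = p ^ m := by rw [abs_pow, abs_neg, abs_of_nonneg hp0]
  have h1 := neg_abs_le ((-p) ^ m)
  have h2 := le_abs_self ((-p) ^ m)
  rw [this] at h1 h2
  exact ⟨h1, h2⟩

lemma mu_nonneg {p : ℝ} (hp0 : 0 ≤ p) (hp : p ≤ 1 / 2) (m : ℕ) : 0 ≤ mu p m := by
  have hq0 : (0:ℝ) ≤ 1 - p := by linarith
  have hpq : p ≤ 1 - p := by linarith
  match m with
  | 0 => rw [mu_zero]; norm_num
  | (k+1) =>
    have h1 : -(p ^ (k+1)) ≤ (-p) ^ (k+1) := (neg_pow_le hp0 (k+1)).1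
    have h2 : p ^ k ≤ (1 - p) ^ k := pow_le_pow_left₀ hp0 hpq k
    have h3 : (0:ℝ) ≤ p ^ k := pow_nonneg hp0 k
    have h5 : (1 - p) * (-(p ^ (k+1))) ≤ (1 - p) * (-p) ^ (k+1) :=
      mul_le_mul_of_nonneg_left h1 hq0
    have key : 0 ≤ p * (1 - p) ^ (k+1) - (1 - p) * p ^ (k+1) := by
      rw [pow_succ, pow_succ]
      nlinarith [mul_nonneg (mul_nonneg hp0 hq0) (sub_nonneg.mpr h2)]
    unfold mu
    nlinarith [h5]

lemma mu_le {p : ℝ} (hp0 : 0 ≤ p) (hp : p ≤ 1 / 2) {m : ℕ} (hm : 2 ≤ m) :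
    mu p m ≤ p * (1 - p) := by
  have hq0 : (0:ℝ) ≤ 1 - p := by linarith
  have hp1 : p ≤ 1 := by linarith
  have hq1 : 1 - p ≤ 1 := by linarith
  obtain ⟨k, rfl⟩ : ∃ k, m = k + 2 := ⟨m - 2, by omega⟩
  have h1 : (-p) ^ (k+2) ≤ p ^ (k+2) := (neg_pow_le hp0 (k+2)).2
  have h2 : p ^ (k+1) ≤ p := pow_le_of_le_one hp0 hp1 (by omega)
  have h3 : (1 - p) ^ (k+1) ≤ 1 - p := pow_le_of_le_one hq0 hq1 (by omega)
  have h4 : (0:ℝ) ≤ p ^ (k+1) := pow_nonneg hp0 _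
  have h5 : (0:ℝ) ≤ (1 - p) ^ (k+1) := pow_nonneg hq0 _
  have hq' : (1 - p) * (-p) ^ (k+2) ≤ (1 - p) * (p ^ (k+1) * p) := by
    have := mul_le_mul_of_nonneg_left h1 hq0
    rwa [pow_succ] at this
  have hA : p * (1 - p) ^ (k+1) * (1 - p) ≤ p * (1 - p) * (1 - p) :=
    mul_le_mul_of_nonneg_right (mul_le_mul_of_nonneg_left h3 hp0) hq0
  have hB : (1 - p) * p ^ (k+1) * p ≤ (1 - p) * p * p :=
    mul_le_mul_of_nonneg_right (mul_le_mul_of_nonneg_left h2 hq0) hp0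
  unfold mu
  rw [show (1 - p) ^ (k+2) = (1 - p) ^ (k+1) * (1 - p) from pow_succ _ _]
  nlinarith [hq', hA, hB]

lemma sum_cnt {n d : ℕ} (f : Fin d → Fin n) : ∑ i, cnt f i = d := by
  classical
  have := Finset.card_eq_sum_card_fiberwise (s := (univ : Finset (Fin d)))
    (t := (univ : Finset (Fin n))) (f := f) (fun t _ => mem_univ (f t))
  simpa [cnt] using this.symm

lemma cnt_eq_zero {n d : ℕ} {f : Fin d → Fin n} {i : Fin n}
    (h : i ∉ univ.image f) : cnt f i = 0 := by
  classical
  rw [cnt, Finset.card_eq_zero, Finset.filter_eq_empty_iff]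
  intro t _
  intro ht
  exact h (mem_image.mpr ⟨t, mem_univ t, ht⟩)

lemma one_le_cnt {n d : ℕ} {f : Fin d → Fin n} {i : Fin n}
    (h : i ∈ univ.image f) : 1 ≤ cnt f i := by
  classical
  rw [Nat.one_le_iff_ne_zero]
  intro h0
  rw [cnt, Finset.card_eq_zero, Finset.filter_eq_empty_iff] at h0
  obtain ⟨t, _, ht⟩ := mem_image.mp h
  exact h0 (mem_univ t) ht

/-- Independence factorization for a fixed multiplicity function. -/
lemma factor (p : ℝ) {n d : ℕ} (f : Fin d → Fin n) :
    ∑ A ∈ (univ : Finset (Fin n)).powerset,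
      (∏ i : Fin n, (if i ∈ A then p else 1 - p)) *
        ∏ t : Fin d, ((if f t ∈ A then (1:ℝ) else 0) - p) =
    ∏ i : Fin n, mu p (cnt f i) := by
  classical
  have step1 : ∀ A : Finset (Fin n),
      (∏ t : Fin d, ((if f t ∈ A then (1:ℝ) else 0) - p)) =
        ∏ i : Fin n, ((if i ∈ A then (1:ℝ) else 0) - p) ^ cnt f i := by
    intro A
    rw [← Finset.prod_fiberwise_of_maps_to (t := (univ : Finset (Fin n)))
      (fun t _ => mem_univ (f t)) (fun t => (if f t ∈ A then (1:ℝ) else 0) - p)]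
    refine Finset.prod_congr rfl fun i _ => ?_
    rw [Finset.prod_congr rfl (fun t ht => by
        rw [(Finset.mem_filter.mp ht).2] : ∀ t ∈ univ.filter fun t => f t = i,
          ((if f t ∈ A then (1:ℝ) else 0) - p) = ((if i ∈ A then (1:ℝ) else 0) - p)),
      Finset.prod_const]
    rfl
  have step3 : ∀ (A : Finset (Fin n)) (i : Fin n),
      (if i ∈ A then p else 1 - p) * ((if i ∈ A then (1:ℝ) else 0) - p) ^ cnt f i =
        (if i ∈ A then p * (1 - p) ^ cnt f i else (1 - p) * (-p) ^ cnt f i) := by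
    intro A i
    by_cases h : i ∈ A <;> simp [h]
  have hfilter : ∀ A : Finset (Fin n), univ.filter (fun i => i ∉ A) = univ \ A := by
    intro A; ext i; simp
  calc ∑ A ∈ (univ : Finset (Fin n)).powerset,
        (∏ i : Fin n, (if i ∈ A then p else 1 - p)) *
          ∏ t : Fin d, ((if f t ∈ A then (1:ℝ) else 0) - p)
      = ∑ A ∈ (univ : Finset (Fin n)).powerset,
          ∏ i : Fin n, (if i ∈ A then p * (1 - p) ^ cnt f i else (1 - p) * (-p) ^ cnt f i) := by
        refine Finset.sum_congr rfl fun A _ => ?_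
        rw [step1 A, ← Finset.prod_mul_distrib]
        exact Finset.prod_congr rfl fun i _ => step3 A i
    _ = ∑ A ∈ (univ : Finset (Fin n)).powerset,
          (∏ i ∈ A, p * (1 - p) ^ cnt f i) * ∏ i ∈ univ \ A, (1 - p) * (-p) ^ cnt f i := by
        refine Finset.sum_congr rfl fun A hA => ?_
        rw [Finset.prod_ite (fun i => p * (1 - p) ^ cnt f i)
          (fun i => (1 - p) * (-p) ^ cnt f i), Finset.filter_univ_mem, hfilter A]
    _ = ∏ i : Fin n, (p * (1 - p) ^ cnt f i + (1 - p) * (-p) ^ cnt f i) :=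
        (Finset.prod_add _ _ _).symm
    _ = ∏ i : Fin n, mu p (cnt f i) := rfl

/-- Key identity: the central binomial moment as a sum over functions. -/
lemma expand (p : ℝ) (n d : ℕ) :
    ∑ j ∈ Finset.range (n + 1),
        (n.choose j : ℝ) * p ^ j * (1 - p) ^ (n - j) * ((j : ℝ) - n * p) ^ d =
    ∑ f : Fin d → Fin n, ∏ i : Fin n, mu p (cnt f i) := by
  classical
  have hw : ∀ A : Finset (Fin n),
      (∏ i : Fin n, (if i ∈ A then p else 1 - p)) =
        p ^ A.card * (1 - p) ^ (n - A.card) := by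
    intro A
    rw [Finset.prod_ite (fun _ => p) (fun _ => 1 - p), Finset.prod_const, Finset.prod_const,
      Finset.filter_univ_mem]
    congr 1
    have h1 : univ.filter (fun i => i ∉ A) = univ \ A := by ext i; simp
    rw [h1, Finset.card_sdiff_of_subset (subset_univ A), Finset.card_univ, Fintype.card_fin]
  have hsum : ∀ A : Finset (Fin n),
      ((A.card : ℝ) - n * p) = ∑ i : Fin n, ((if i ∈ A then (1:ℝ) else 0) - p) := by
    intro A
    rw [Finset.sum_sub_distrib, Finset.sum_boole, Finset.filter_univ_mem, Finset.sum_const,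
      Finset.card_univ, Fintype.card_fin, nsmul_eq_mul]
  have hstep1 : ∑ j ∈ Finset.range (n + 1),
        (n.choose j : ℝ) * p ^ j * (1 - p) ^ (n - j) * ((j : ℝ) - n * p) ^ d =
      ∑ A ∈ (univ : Finset (Fin n)).powerset,
        p ^ A.card * (1 - p) ^ (n - A.card) * ((A.card : ℝ) - n * p) ^ d := by
    rw [Finset.sum_powerset (univ : Finset (Fin n))
      (fun A => p ^ A.card * (1 - p) ^ (n - A.card) * ((A.card : ℝ) - n * p) ^ d),
      Finset.card_univ, Fintype.card_fin]
    refine Finset.sum_congr rfl fun j hj => ?_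
    rw [Finset.sum_congr rfl (fun A hA => by
        rw [(Finset.mem_powersetCard.mp hA).2] :
        ∀ A ∈ Finset.powersetCard j (univ : Finset (Fin n)),
          p ^ A.card * (1 - p) ^ (n - A.card) * ((A.card : ℝ) - n * p) ^ d =
            p ^ j * (1 - p) ^ (n - j) * ((j : ℝ) - n * p) ^ d),
      Finset.sum_const, Finset.card_powersetCard, Finset.card_univ, Fintype.card_fin,
      nsmul_eq_mul]
    ring
  rw [hstep1]
  calc ∑ A ∈ (univ : Finset (Fin n)).powerset,
        p ^ A.card * (1 - p) ^ (n - A.card) * ((A.card : ℝ) - n * p) ^ d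
      = ∑ A ∈ (univ : Finset (Fin n)).powerset,
          ∑ f ∈ Fintype.piFinset (fun _ : Fin d => (univ : Finset (Fin n))),
            (∏ i : Fin n, (if i ∈ A then p else 1 - p)) *
              ∏ t : Fin d, ((if f t ∈ A then (1:ℝ) else 0) - p) := by
        refine Finset.sum_congr rfl fun A _ => ?_
        rw [← hw A, hsum A, Finset.sum_pow', Finset.mul_sum]
    _ = ∑ f ∈ Fintype.piFinset (fun _ : Fin d => (univ : Finset (Fin n))),
          ∑ A ∈ (univ : Finset (Fin n)).powerset,
            (∏ i : Fin n, (if i ∈ A then p else 1 - p)) *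
              ∏ t : Fin d, ((if f t ∈ A then (1:ℝ) else 0) - p) := Finset.sum_comm
    _ = ∑ f : Fin d → Fin n, ∏ i : Fin n, mu p (cnt f i) := by
        rw [Fintype.piFinset_univ]
        exact Finset.sum_congr rfl fun f _ => factor p f

/-- pointwise bound for the product of moments. -/
lemma prod_mu_le {p : ℝ} (hp0 : 0 ≤ p) (hp : p ≤ 1 / 2) {n d : ℕ} (f : Fin d → Fin n) :
    ∏ i : Fin n, mu p (cnt f i) ≤ (p * (1 - p)) ^ (univ.image f).card := by
  classical
  have hpq : (0:ℝ) ≤ p * (1 - p) := mul_nonneg hp0 (by linarith)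
  by_cases hgood : ∀ i ∈ univ.image f, 2 ≤ cnt f i
  · have h1 : ∏ i : Fin n, mu p (cnt f i) = ∏ i ∈ univ.image f, mu p (cnt f i) := by
      refine (Finset.prod_subset (subset_univ _) ?_).symm
      intro i _ hi
      rw [cnt_eq_zero hi, mu_zero]
    rw [h1]
    calc ∏ i ∈ univ.image f, mu p (cnt f i)
        ≤ ∏ i ∈ univ.image f, (p * (1 - p)) :=
          Finset.prod_le_prod (fun i _ => mu_nonneg hp0 hp _)
            (fun i hi => mu_le hp0 hp (hgood i hi))
      _ = (p * (1 - p)) ^ (univ.image f).card := by rw [Finset.prod_const]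
  · push_neg at hgood
    obtain ⟨i, hi, hlt⟩ := hgood
    have h1 : cnt f i = 1 := le_antisymm (by omega) (one_le_cnt hi)
    have : ∏ j : Fin n, mu p (cnt f j) = 0 :=
      Finset.prod_eq_zero (mem_univ i) (by rw [h1, mu_one])
    rw [this]
    exact pow_nonneg hpq _

lemma prod_mu_eq_zero_of_not_good {p : ℝ} {n d : ℕ} {f : Fin d → Fin n}
    (h : ¬ ∀ i ∈ univ.image f, 2 ≤ cnt f i) :
    ∏ i : Fin n, mu p (cnt f i) = 0 := by
  classical
  push_neg at h
  obtain ⟨i, hi, hlt⟩ := h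
  have h1 : cnt f i = 1 := le_antisymm (by omega) (one_le_cnt hi)
  exact Finset.prod_eq_zero (mem_univ i) (by rw [h1, mu_one])

lemma good_card_le {n d : ℕ} {f : Fin d → Fin n}
    (h : ∀ i ∈ univ.image f, 2 ≤ cnt f i) : 2 * (univ.image f).card ≤ d := by
  classical
  have h1 : ∑ i ∈ univ.image f, cnt f i = d := by
    have h2 : ∑ i ∈ univ.image f, cnt f i = ∑ i : Fin n, cnt f i :=
      Finset.sum_subset (subset_univ _) (fun i _ hi => cnt_eq_zero hi)
    rw [h2, sum_cnt]
  calc 2 * (univ.image f).card = ∑ _i ∈ univ.image f, 2 := by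
        rw [Finset.sum_const, smul_eq_mul, mul_comm]
    _ ≤ ∑ i ∈ univ.image f, cnt f i := Finset.sum_le_sum h
    _ = d := h1

end CMUB

open CMUB in
/-- upper bound on the d-th central binomial moment for p ≤ 1/2. -/
theorem central_moment_upper_bound (n : ℕ) (p : ℝ) (hp0 : 0 ≤ p)
    (hp : p ≤ 1 / 2) (q : ℝ) (hq : q = 1 - p) (d : ℕ) (hd : 2 ≤ d) :
    ∑ j ∈ Finset.range (n + 1),
        (n.choose j : ℝ) * p ^ j * q ^ (n - j) * ((j : ℝ) - n * p) ^ d ≤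
    ∑ k ∈ Finset.Icc 1 (d / 2),
      (n.choose k : ℝ) * (p * q) ^ k * (k : ℝ) ^ d := by
  classical
  subst hq
  have hpq : (0:ℝ) ≤ p * (1 - p) := mul_nonneg hp0 (by linarith)
  rw [expand p n d]
  -- group the functions by their image
  have hmaps : ∀ f ∈ (univ : Finset (Fin d → Fin n)),
      univ.image f ∈ (univ : Finset (Fin n)).powerset :=
    fun f _ => mem_powerset.mpr (subset_univ _)
  rw [← Finset.sum_fiberwise_of_maps_to hmaps (fun f => ∏ i : Fin n, mu p (cnt f i))]
  -- bound each fiber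
  set G : ℕ → ℝ := fun k => if k ∈ Finset.Icc 1 (d / 2) then (p * (1 - p)) ^ k * (k : ℝ) ^ d else 0
    with hG
  have hGnonneg : ∀ k, 0 ≤ G k := by
    intro k; rw [hG]; dsimp only
    split
    · positivity
    · exact le_refl 0
  have hfiber : ∀ T ∈ (univ : Finset (Fin n)).powerset,
      ∑ f ∈ univ.filter (fun f : Fin d → Fin n => univ.image f = T),
        ∏ i : Fin n, mu p (cnt f i) ≤ G T.card := by
    intro T _
    by_cases hT : T.card ∈ Finset.Icc 1 (d / 2)
    · -- bound by count times (pq)^k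
      have hcard : (univ.filter (fun f : Fin d → Fin n => univ.image f = T)).card ≤ T.card ^ d := by
        have hsub : univ.filter (fun f : Fin d → Fin n => univ.image f = T) ⊆
            Fintype.piFinset (fun _ : Fin d => T) := by
          intro f hf
          rw [Finset.mem_filter] at hf
          rw [Fintype.mem_piFinset]
          intro t
          rw [← hf.2]
          exact mem_image_of_mem f (mem_univ t)
        calc (univ.filter (fun f : Fin d → Fin n => univ.image f = T)).card
            ≤ (Fintype.piFinset (fun _ : Fin d => T)).card := Finset.card_le_card hsub
          _ = T.card ^ d := Fintype.card_piFinset_const T d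
      have hle : ∀ f ∈ univ.filter (fun f : Fin d → Fin n => univ.image f = T),
          ∏ i : Fin n, mu p (cnt f i) ≤ (p * (1 - p)) ^ T.card := by
        intro f hf
        rw [Finset.mem_filter] at hf
        rw [← hf.2]
        exact prod_mu_le hp0 hp f
      calc ∑ f ∈ univ.filter (fun f : Fin d → Fin n => univ.image f = T),
            ∏ i : Fin n, mu p (cnt f i)
          ≤ (univ.filter (fun f : Fin d → Fin n => univ.image f = T)).card •
              ((p * (1 - p)) ^ T.card) := Finset.sum_le_card_nsmul _ _ _ hle
        _ = ((univ.filter (fun f : Fin d → Fin n => univ.image f = T)).card : ℝ) *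
              (p * (1 - p)) ^ T.card := by rw [nsmul_eq_mul]
        _ ≤ (T.card ^ d : ℕ) * (p * (1 - p)) ^ T.card := by
            apply mul_le_mul_of_nonneg_right _ (pow_nonneg hpq _)
            exact_mod_cast hcard
        _ = G T.card := by rw [hG]; simp only [hT, if_true]; push_cast; ring
    · -- every f in the fiber gives 0
      have hzero : ∀ f ∈ univ.filter (fun f : Fin d → Fin n => univ.image f = T),
          ∏ i : Fin n, mu p (cnt f i) = 0 := by
        intro f hf
        rw [Finset.mem_filter] at hf
        apply prod_mu_eq_zero_of_not_good
        intro hgood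
        apply hT
        have h2 := good_card_le hgood
        rw [hf.2] at h2
        have hne : T.Nonempty := by
          rw [← hf.2]
          exact ⟨f ⟨0, by omega⟩, mem_image_of_mem f (mem_univ _)⟩
        rw [Finset.mem_Icc]
        constructor
        · exact Finset.card_pos.mpr hne
        · omega
      rw [Finset.sum_congr rfl hzero, Finset.sum_const_zero]
      exact hGnonneg _
  calc ∑ T ∈ (univ : Finset (Fin n)).powerset,
        ∑ f ∈ univ.filter (fun f : Fin d → Fin n => univ.image f = T),
          ∏ i : Fin n, mu p (cnt f i)
      ≤ ∑ T ∈ (univ : Finset (Fin n)).powerset, G T.card := Finset.sum_le_sum hfiber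
    _ = ∑ j ∈ Finset.range (n + 1), (n.choose j : ℝ) * G j := by
        rw [Finset.sum_powerset (univ : Finset (Fin n)) (fun T => G T.card)]
        rw [Finset.card_univ, Fintype.card_fin]
        refine Finset.sum_congr rfl fun j _ => ?_
        have : ∀ T ∈ Finset.powersetCard j (univ : Finset (Fin n)), G T.card = G j := by
          intro T hT
          rw [(Finset.mem_powersetCard.mp hT).2]
        rw [Finset.sum_congr rfl this, Finset.sum_const, Finset.card_powersetCard,
          Finset.card_univ, Fintype.card_fin, nsmul_eq_mul]
    _ ≤ ∑ k ∈ Finset.Icc 1 (d / 2), (n.choose k : ℝ) * (p * (1 - p)) ^ k * (k : ℝ) ^ d := by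
        have : ∀ j, (n.choose j : ℝ) * G j =
            if j ∈ Finset.Icc 1 (d / 2) then (n.choose j : ℝ) * (p * (1 - p)) ^ j * (j : ℝ) ^ d
            else 0 := by
          intro j; rw [hG]; dsimp only
          split
          · ring
          · ring
        rw [Finset.sum_congr rfl (fun j _ => this j), Finset.sum_ite_mem]
        apply Finset.sum_le_sum_of_subset_of_nonneg (Finset.inter_subset_right)
        intro k _ _
        positivity
end

section
/- Let 0 ≤ p ≤ 1 and q = 1−p, let k ≥ 1 and let d_1,…,d_k be even natural numbers, each at least 2, with d_1+⋯+d_k = d. Then ∏_{i=1}^{k} (q^{d_i−1} − (−p)^{d_i−1}) = ∏_{i=1}^{k} (q^{d_i−1} + p^{d_i−1}) ≥ 2^{2k−d}. -/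
open Finset

lemma two_zpow_sum {ι : Type*} (s : Finset ι) (f : ι → ℤ) :
    (2:ℝ) ^ (∑ i ∈ s, f i) = ∏ i ∈ s, (2:ℝ) ^ (f i) := by
  induction s using Finset.cons_induction with
  | empty => simp
  | cons a s h ih =>
    simp [Finset.sum_cons, Finset.prod_cons, zpow_add₀ (two_ne_zero (α := ℝ)), ih]

lemma key_bound (p q : ℝ) (hp : 0 ≤ p) (hq : 0 ≤ q) (hpq : p + q = 1) (n : ℕ) :
    (2:ℝ) ^ (1 - (n:ℤ)) ≤ q ^ n + p ^ n := by
  have h := Real.pow_arith_mean_le_arith_mean_pow (Finset.univ : Finset (Fin 2))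
    ![1/2, 1/2] ![p, q] (fun i _ => by fin_cases i <;> norm_num) (by norm_num [Fin.sum_univ_two])
    (fun i _ => by fin_cases i <;> simpa) n
  simp only [Fin.sum_univ_two, Matrix.cons_val_zero, Matrix.cons_val_one, Matrix.head_cons] at h
  have h2 : ((1:ℝ)/2 * p + 1/2 * q) ^ n = (1/2) ^ n := by
    rw [show (1:ℝ)/2 * p + 1/2 * q = (p + q) / 2 by ring, hpq]
  rw [h2] at h
  have : (2:ℝ) ^ (1 - (n:ℤ)) = 2 * (1/2)^n := by
    rw [zpow_sub₀ (by norm_num), zpow_one, zpow_natCast]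
    field_simp
    rw [← mul_pow]; norm_num
  rw [this]
  nlinarith [h]

/-- for even parts d_i ≥ 2 summing to d, the product of the
factors q^{d_i−1} − (−p)^{d_i−1} equals ∏ (q^{d_i−1} + p^{d_i−1}) and is at
least 2^{2k−d}. -/
theorem prod_factor_lower_bound (p : ℝ) (hp0 : 0 ≤ p) (hp1 : p ≤ 1) (q : ℝ)
    (hq : q = 1 - p) (k : ℕ) (hk : 1 ≤ k) (d : ℕ) (a : Fin k → ℕ)
    (heven : ∀ i, Even (a i)) (h2 : ∀ i, 2 ≤ a i) (hsum : ∑ i, a i = d) :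
    (∏ i, (q ^ (a i - 1) - (-p) ^ (a i - 1)) =
      ∏ i, (q ^ (a i - 1) + p ^ (a i - 1))) ∧
    (2 : ℝ) ^ (2 * (k : ℤ) - (d : ℤ)) ≤
      ∏ i, (q ^ (a i - 1) + p ^ (a i - 1)) := by
  have hq0 : 0 ≤ q := by rw [hq]; linarith
  have hpq : p + q = 1 := by rw [hq]; ring
  constructor
  · refine Finset.prod_congr rfl fun i _ => ?_
    have hodd : Odd (a i - 1) := by
      rcases heven i with ⟨m, hm⟩
      have : 1 ≤ a i := le_trans one_le_two (h2 i)
      exact ⟨m - 1, by omega⟩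
    rw [hodd.neg_pow]; ring
  · calc (2 : ℝ) ^ (2 * (k : ℤ) - (d : ℤ))
        = ∏ i, (2:ℝ) ^ (1 - ((a i - 1 : ℕ) : ℤ)) := by
          rw [← two_zpow_sum]
          congr 1
          have : ∀ i : Fin k, ((a i - 1 : ℕ) : ℤ) = (a i : ℤ) - 1 := fun i => by
            have := h2 i; omega
          simp only [this]
          rw [Finset.sum_sub_distrib, Finset.sum_sub_distrib, Finset.sum_const,
            Finset.card_univ, Fintype.card_fin]
          push_cast [← hsum]
          ring
      _ ≤ ∏ i, (q ^ (a i - 1) + p ^ (a i - 1)) := by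
          apply Finset.prod_le_prod
          · intro i _; positivity
          · intro i _; exact key_bound p q hp0 hq0 hpq _
end

section
/- There exists a universal constant c > 0 such that for every natural number n, every real p with 0 ≤ p ≤ 1 and q = 1−p, and every even natural number d ≥ 2, the d-th central binomial moment satisfies ∑_{j=0}^{n} C(n,j) p^j q^{n−j} (j−np)^d ≥ ∑_{k=1}^{⌊d/2⌋} C(n,k) (pq)^k · (c·k)^d. -/
set_option maxHeartbeats 1000000

open Finset

namespace CMLB

noncomputable def w (p : ℝ) (i : ℕ) : ℝ := (1 - p) ^ (i - 1) - (-p) ^ (i - 1)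

noncomputable def u (p : ℝ) (i : ℕ) : ℝ := ∑ a ∈ range (i - 1), (1 - p) ^ a * p ^ (i - 2 - a)

noncomputable def v (p : ℝ) (ε : Bool) (i : ℕ) : ℝ :=
  if Even i then w p i else (if ε then u p i else (1 - 2 * p) ^ 2 * u p i)

noncomputable def Wp (p : ℝ) : ℕ → ℕ → Bool → ℝ
  | d, 0, ε => if d = 0 ∧ ε = false then 1 else 0
  | d, k + 1, ε => ∑ i ∈ Icc 2 d,
      (d.choose i : ℝ) * v p ε i * Wp p (d - i) k (if Even i then ε else !ε)

noncomputable def W (p : ℝ) : ℕ → ℕ → ℝ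
  | d, 0 => if d = 0 then 1 else 0
  | d, k + 1 => ∑ i ∈ Icc 2 d, (d.choose i : ℝ) * w p i * W p (d - i) k

noncomputable def M (p : ℝ) (n d : ℕ) : ℝ :=
  ∑ j ∈ range (n + 1), (n.choose j : ℝ) * p ^ j * (1 - p) ^ (n - j) * ((j : ℝ) - n * p) ^ d

noncomputable def m (p : ℝ) (i : ℕ) : ℝ := (1 - p) * (-p) ^ i + p * (1 - p) ^ i

variable {p : ℝ}

lemma w_one : w p 1 = 0 := by simp [w]

lemma m_zero : m p 0 = 1 := by simp [m]

lemma w_even {i : ℕ} (h2 : 2 ≤ i) (he : Even i) : w p i = (1 - p) ^ (i - 1) + p ^ (i - 1) := by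
  have ho : Odd (i - 1) := by
    rcases he with ⟨t, rfl⟩
    exact ⟨t - 1, by omega⟩
  rw [w, ho.neg_pow, sub_neg_eq_add]

lemma w_odd {i : ℕ} (h2 : 2 ≤ i) (ho : ¬ Even i) : w p i = (1 - 2 * p) * u p i := by
  have he : Even (i - 1) := by
    have := Nat.odd_iff.1 (Nat.not_even_iff_odd.1 ho)
    exact Nat.even_sub (by omega) |>.2 (by simp [Nat.even_iff]; omega)
  have key := geom_sum₂_mul (1 - p) p (i - 1)
  have : w p i = (1 - p) ^ (i - 1) - p ^ (i - 1) := by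
    rw [w, he.neg_pow]
  rw [this, ← key]
  have : (1 - p - p) = 1 - 2 * p := by ring
  rw [this, u, mul_comm]
  congr 1

lemma u_nonneg (hp0 : 0 ≤ p) (hp1 : p ≤ 1) (i : ℕ) : 0 ≤ u p i := by
  apply Finset.sum_nonneg
  intro a _
  have : (0:ℝ) ≤ 1 - p := by linarith
  positivity

lemma w_even_nonneg (hp0 : 0 ≤ p) (hp1 : p ≤ 1) {i : ℕ} (h2 : 2 ≤ i) (he : Even i) :
    0 ≤ w p i := by
  rw [w_even h2 he]
  have : (0:ℝ) ≤ 1 - p := by linarith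
  positivity

lemma w_even_lower (hp0 : 0 ≤ p) (hp1 : p ≤ 1) {i : ℕ} (h2 : 2 ≤ i) (he : Even i) :
    ((2:ℝ)⁻¹) ^ i ≤ w p i := by
  rw [w_even h2 he]
  have h1p : (0:ℝ) ≤ 1 - p := by linarith
  have key : ((2:ℝ)⁻¹) ^ (i-1) ≤ (1 - p) ^ (i - 1) + p ^ (i - 1) := by
    rcases le_or_gt p 2⁻¹ with h | h
    · have : ((2:ℝ)⁻¹) ^ (i-1) ≤ (1 - p) ^ (i-1) :=
        pow_le_pow_left₀ (by norm_num) (by linarith) _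
      nlinarith [pow_nonneg hp0 (i-1)]
    · have : ((2:ℝ)⁻¹) ^ (i-1) ≤ p ^ (i-1) := pow_le_pow_left₀ (by norm_num) (by linarith) _
      nlinarith [pow_nonneg h1p (i-1)]
  refine le_trans ?_ key
  apply pow_le_pow_of_le_one (by norm_num) (by norm_num)
  omega

lemma m_eq {i : ℕ} (h1 : 1 ≤ i) : m p i = p * (1 - p) * w p i := by
  obtain ⟨j, rfl⟩ := Nat.exists_eq_add_of_le h1
  rw [m, w]
  have h2 : 1 + j - 1 = j := by omega
  rw [h2, pow_add, pow_add, pow_one, pow_one]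
  ring


lemma v_nonneg (hp0 : 0 ≤ p) (hp1 : p ≤ 1) (ε : Bool) {i : ℕ} (h2 : 2 ≤ i) :
    0 ≤ v p ε i := by
  rw [v]
  split
  · exact w_even_nonneg hp0 hp1 h2 ‹_›
  · have := u_nonneg hp0 hp1 i
    split
    · exact this
    · positivity

lemma Wp_nonneg (hp0 : 0 ≤ p) (hp1 : p ≤ 1) : ∀ k d ε, 0 ≤ Wp p d k ε := by
  intro k
  induction k with
  | zero => intro d ε; rw [Wp]; split <;> norm_num
  | succ k ih =>
    intro d ε
    rw [Wp]
    apply Finset.sum_nonneg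
    intro i hi
    simp only [mem_Icc] at hi
    have hv := v_nonneg hp0 hp1 ε hi.1
    have := ih (d - i) (if Even i then ε else !ε)
    positivity

lemma Wp_parity : ∀ k d (ε : Bool), (Even d ↔ ε = true) → Wp p d k ε = 0 := by
  intro k
  induction k with
  | zero =>
    intro d ε h
    rw [Wp]
    rw [if_neg]
    rintro ⟨rfl, rfl⟩
    simp at h
  | succ k ih =>
    intro d ε h
    rw [Wp]
    apply Finset.sum_eq_zero
    intro i hi
    simp only [mem_Icc] at hi
    rw [ih (d - i) _ ?_, mul_zero]
    by_cases hei : Even i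
    · simp only [if_pos hei]
      rw [Nat.even_sub hi.2]
      tauto
    · simp only [if_neg hei]
      rw [Nat.even_sub hi.2]
      rcases ε <;> simp_all [Nat.even_iff, Nat.odd_iff] <;> omega

lemma W_eq_Wp : ∀ k d, W p d k = Wp p d k false + (1 - 2 * p) * Wp p d k true := by
  intro k
  induction k with
  | zero =>
    intro d
    rw [W, Wp, Wp]
    simp
  | succ k ih =>
    intro d
    rw [W, Wp, Wp, Finset.mul_sum, ← Finset.sum_add_distrib]
    apply Finset.sum_congr rfl
    intro i hi
    simp only [mem_Icc] at hi
    rw [ih (d - i)]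
    by_cases hei : Even i
    · simp only [if_pos hei, v, if_pos hei]
      ring
    · simp only [if_neg hei, v, Bool.not_false, Bool.not_true]
      rw [w_odd hi.1 hei]
      simp only [if_true, if_false, Bool.false_eq_true, Bool.true_eq_false]
      ring

lemma W_zero : ∀ k d, d < 2 * k → W p d k = 0 := by
  intro k
  induction k with
  | zero => intro d h; omega
  | succ k ih =>
    intro d h
    rw [W]
    apply Finset.sum_eq_zero
    intro i hi
    simp only [mem_Icc] at hi
    rw [ih (d - i) (by omega), mul_zero]

lemma W_eq_Wp_false {d : ℕ} (hd : Even d) (k : ℕ) : W p d k = Wp p d k false := by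
  rw [W_eq_Wp, Wp_parity k d true (by simp [hd]), mul_zero, add_zero]

lemma M_succ (n d : ℕ) :
    M p (n + 1) d = ∑ i ∈ range (d + 1), (d.choose i : ℝ) * m p i * M p n (d - i) := by
  classical
  set G : ℕ → ℝ := fun j => p ^ j * (1 - p) ^ (n + 1 - j) * ((j : ℝ) - ((n : ℝ) + 1) * p) ^ d
    with hG
  have hM : M p (n + 1) d = ∑ j ∈ range (n + 2), ((n + 1).choose j : ℝ) * G j := by
    unfold M
    apply Finset.sum_congr rfl
    intro j _
    rw [hG]
    push_cast
    ring
  have hsplit : M p (n + 1) d = ∑ j ∈ range (n + 1), (n.choose j : ℝ) * G j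
      + ∑ j ∈ range (n + 1), (n.choose j : ℝ) * G (j + 1) := by
    rw [hM, Finset.sum_range_succ']
    have h1 : ∑ j ∈ range (n + 1), ((n + 1).choose (j + 1) : ℝ) * G (j + 1)
        = ∑ j ∈ range (n + 1), (n.choose j : ℝ) * G (j + 1)
          + ∑ j ∈ range (n + 1), (n.choose (j + 1) : ℝ) * G (j + 1) := by
      rw [← Finset.sum_add_distrib]
      apply Finset.sum_congr rfl
      intro j _
      rw [Nat.choose_succ_succ]
      push_cast
      ring
    have h2 : ∑ j ∈ range (n + 1), ((n.choose (j + 1)) : ℝ) * G (j + 1)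
          + ((n + 1).choose 0 : ℝ) * G 0
        = ∑ j ∈ range (n + 1), (n.choose j : ℝ) * G j := by
      have h3 := Finset.sum_range_succ' (fun j => (n.choose j : ℝ) * G j) (n + 1)
      rw [Finset.sum_range_succ] at h3
      simp only [Nat.choose_succ_self, Nat.cast_zero, zero_mul, add_zero, Nat.choose_zero_right,
        Nat.cast_one] at h3 ⊢
      linarith
    rw [h1]
    linarith
  have hGj : ∀ j ∈ range (n + 1), (n.choose j : ℝ) * G j + (n.choose j : ℝ) * G (j + 1)
      = ∑ i ∈ range (d + 1), (d.choose i : ℝ) * m p i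
          * ((n.choose j : ℝ) * p ^ j * (1 - p) ^ (n - j) * ((j : ℝ) - n * p) ^ (d - i)) := by
    intro j hj
    have hjn : j ≤ n := Nat.lt_succ_iff.1 (Finset.mem_range.1 hj)
    have e1 : n + 1 - j = (n - j) + 1 := by omega
    have e2 : n + 1 - (j + 1) = n - j := by omega
    have c1 : ((j : ℝ) - ((n : ℝ) + 1) * p) = (-p) + ((j : ℝ) - n * p) := by ring
    have c2 : (((j : ℝ) + 1) - ((n : ℝ) + 1) * p) = (1 - p) + ((j : ℝ) - n * p) := by ring
    rw [hG]
    simp only [Nat.cast_add, Nat.cast_one]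
    rw [e1, e2, c1, c2, add_pow, add_pow]
    simp only [Finset.mul_sum]
    rw [← Finset.sum_add_distrib]
    apply Finset.sum_congr rfl
    intro i hi
    rw [m]
    ring
  rw [hsplit, ← Finset.sum_add_distrib, Finset.sum_congr rfl hGj, Finset.sum_comm]
  apply Finset.sum_congr rfl
  intro i _
  rw [M, Finset.mul_sum]

lemma W_succ' (d k : ℕ) : W p d (k + 1)
    = ∑ i ∈ range d, (d.choose (i + 1) : ℝ) * w p (i + 1) * W p (d - (i + 1)) k := by
  rw [W]
  rcases d with _ | e
  · rw [Finset.Icc_eq_empty_of_lt (by omega), Finset.range_zero, Finset.sum_empty,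
      Finset.sum_empty]
  · rw [Finset.sum_range_succ' (fun i => ((e + 1).choose (i + 1) : ℝ) * w p (i + 1)
      * W p (e + 1 - (i + 1)) k) e]
    simp only [zero_add, w_one, mul_zero, zero_mul, add_zero]
    rw [← Finset.Ico_add_one_right_eq_Icc, Finset.sum_Ico_eq_sum_range]
    apply Finset.sum_congr
    · congr 1
    · intro i _
      have h1 : 2 + i = i + 1 + 1 := by omega
      rw [h1]

lemma M_eq : ∀ n d, M p n d
    = ∑ k ∈ range (d + 1), (n.choose k : ℝ) * (p * (1 - p)) ^ k * W p d k := by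
  intro n
  induction n with
  | zero =>
    intro d
    rw [Finset.sum_eq_single 0 (fun k _ hk => by
      simp [Nat.choose_eq_zero_of_lt (Nat.pos_of_ne_zero hk)]) (fun h => by simp at h)]
    rw [M, W]
    simp only [Finset.sum_range_one, Nat.choose_self, Nat.cast_one, pow_zero, Nat.cast_zero,
      zero_mul, Nat.sub_zero, one_mul, mul_one, Nat.choose_zero_right]
    rcases Nat.eq_zero_or_pos d with rfl | hd
    · norm_num
    · rw [if_neg (by omega)]
      norm_num [zero_pow (by omega : d ≠ 0)]
  | succ n ih =>
    intro d
    rw [M_succ, Finset.sum_congr rfl (fun i (hi : i ∈ range (d+1)) => by rw [ih (d - i)])]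
    -- extend inner sums to range (d+1)
    have hext : ∀ i ∈ range (d + 1),
        (d.choose i : ℝ) * m p i
          * (∑ k ∈ range (d - i + 1), (n.choose k : ℝ) * (p * (1 - p)) ^ k * W p (d - i) k)
        = ∑ k ∈ range (d + 1),
            (d.choose i : ℝ) * m p i * ((n.choose k : ℝ) * (p * (1 - p)) ^ k * W p (d - i) k) := by
      intro i _
      rw [Finset.mul_sum]
      apply Finset.sum_subset (Finset.range_subset_range.2 (by omega))
      intro k hk hnk
      simp only [Finset.mem_range, not_lt] at hnk
      rw [W_zero k (d - i) (by omega), mul_zero, mul_zero]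
    rw [Finset.sum_congr rfl hext, Finset.sum_comm]
    -- now evaluate the inner sum over i for each k
    have hinner : ∀ k ∈ range (d + 1),
        (∑ i ∈ range (d + 1),
          (d.choose i : ℝ) * m p i * ((n.choose k : ℝ) * (p * (1 - p)) ^ k * W p (d - i) k))
        = (n.choose k : ℝ) * (p * (1 - p)) ^ k * W p d k
          + (n.choose k : ℝ) * (p * (1 - p)) ^ (k + 1) * W p d (k + 1) := by
      intro k _
      rw [Finset.sum_range_succ' (fun i => (d.choose i : ℝ) * m p i
        * ((n.choose k : ℝ) * (p * (1 - p)) ^ k * W p (d - i) k)) d]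
      simp only [Nat.choose_zero_right, Nat.cast_one, one_mul, m_zero, Nat.sub_zero]
      have : ∑ i ∈ range d, (d.choose (i + 1) : ℝ) * m p (i + 1)
          * ((n.choose k : ℝ) * (p * (1 - p)) ^ k * W p (d - (i + 1)) k)
          = (n.choose k : ℝ) * (p * (1 - p)) ^ (k + 1) * W p d (k + 1) := by
        rw [W_succ', Finset.mul_sum]
        apply Finset.sum_congr rfl
        intro i _
        rw [m_eq (by omega)]
        ring
      rw [this]
      ring
    rw [Finset.sum_congr rfl hinner, Finset.sum_add_distrib]
    -- now compare with the RHS using Pascal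
    have htar : ∑ k ∈ range (d + 1), ((n + 1).choose k : ℝ) * (p * (1 - p)) ^ k * W p d k
        = ∑ k ∈ range d, ((n.choose k : ℝ) + (n.choose (k + 1) : ℝ)) * (p * (1 - p)) ^ (k + 1)
            * W p d (k + 1)
          + (n.choose 0 : ℝ) * (p * (1 - p)) ^ 0 * W p d 0 := by
      rw [Finset.sum_range_succ' (fun k => ((n + 1).choose k : ℝ) * (p * (1 - p)) ^ k * W p d k) d]
      simp only [Nat.choose_zero_right, Nat.choose_succ_succ, Nat.cast_add]
    have h2 : ∑ k ∈ range d, ((n.choose (k + 1)) : ℝ) * (p * (1 - p)) ^ (k + 1) * W p d (k + 1)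
          + (n.choose 0 : ℝ) * (p * (1 - p)) ^ 0 * W p d 0
        = ∑ k ∈ range (d + 1), (n.choose k : ℝ) * (p * (1 - p)) ^ k * W p d k :=
      (Finset.sum_range_succ' (fun k => (n.choose k : ℝ) * (p * (1 - p)) ^ k * W p d k) d).symm
    have h3 : ∑ k ∈ range (d + 1), (n.choose k : ℝ) * (p * (1 - p)) ^ (k + 1) * W p d (k + 1)
        = ∑ k ∈ range d, (n.choose k : ℝ) * (p * (1 - p)) ^ (k + 1) * W p d (k + 1) := by
      rw [Finset.sum_range_succ, W_zero (d + 1) d (by omega), mul_zero, add_zero]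
    have h4 : ∑ k ∈ range d, ((n.choose k : ℝ) + (n.choose (k + 1) : ℝ)) * (p * (1 - p)) ^ (k + 1)
            * W p d (k + 1)
        = ∑ k ∈ range d, (n.choose k : ℝ) * (p * (1 - p)) ^ (k + 1) * W p d (k + 1)
          + ∑ k ∈ range d, (n.choose (k + 1) : ℝ) * (p * (1 - p)) ^ (k + 1) * W p d (k + 1) := by
      rw [← Finset.sum_add_distrib]
      apply Finset.sum_congr rfl
      intro k _
      ring
    rw [htar, h4, h3]
    linarith

lemma pow_le_pow_mul_choose : ∀ k n : ℕ, k ≤ n → n ^ k ≤ k ^ k * n.choose k := by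
  intro k
  induction k with
  | zero => intro n _; simp
  | succ k ih =>
    intro n hn
    obtain ⟨m, rfl⟩ : ∃ m, n = m + 1 := ⟨n - 1, by omega⟩
    have hkm : k ≤ m := by omega
    have hL : (m + 1) ^ k * k ^ k ≤ (k + 1) ^ k * m ^ k := by
      calc (m + 1) ^ k * k ^ k = ((m + 1) * k) ^ k := (mul_pow _ _ _).symm
        _ ≤ ((k + 1) * m) ^ k := Nat.pow_le_pow_left (by nlinarith) k
        _ = (k + 1) ^ k * m ^ k := mul_pow _ _ _
    have hpos : 0 < k ^ k := by
      rcases Nat.eq_zero_or_pos k with rfl | h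
      · simp
      · exact Nat.pow_pos h
    apply Nat.le_of_mul_le_mul_right ?_ hpos
    calc (m + 1) ^ (k + 1) * k ^ k = (m + 1) ^ k * k ^ k * (m + 1) := by ring
      _ ≤ (k + 1) ^ k * m ^ k * (m + 1) := Nat.mul_le_mul_right _ hL
      _ ≤ (k + 1) ^ k * (k ^ k * m.choose k) * (m + 1) :=
          Nat.mul_le_mul_right _ (Nat.mul_le_mul_left _ (ih m hkm))
      _ = (k + 1) ^ k * k ^ k * ((m + 1) * m.choose k) := by ring
      _ = (k + 1) ^ k * k ^ k * ((m + 1).choose (k + 1) * (k + 1)) := by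
          rw [Nat.add_one_mul_choose_eq]
      _ = (k + 1) ^ (k + 1) * (m + 1).choose (k + 1) * k ^ k := by ring

lemma succ_pow_le (k : ℕ) : (k + 1) ^ k ≤ 3 * k ^ k := by
  rcases Nat.eq_zero_or_pos k with rfl | hk
  · simp
  · have hk' : (0:ℝ) < (k:ℝ) := by exact_mod_cast hk
    have h1 : ((k:ℝ) + 1) ^ k ≤ 3 * (k:ℝ) ^ k := by
      have e1 : ((k:ℝ) + 1) = k * (1 + 1 / k) := by field_simp
      rw [e1, mul_pow]
      have h2 : (1 + 1 / (k:ℝ)) ^ k ≤ Real.exp (1 / k) ^ k := by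
        apply pow_le_pow_left₀ (by positivity)
        linarith [Real.add_one_le_exp (1 / (k:ℝ))]
      have h3 : Real.exp (1 / (k:ℝ)) ^ k = Real.exp 1 := by
        rw [← Real.exp_nat_mul]
        congr 1
        field_simp
      have h4 : (1 + 1 / (k:ℝ)) ^ k ≤ 3 := by
        rw [h3] at h2
        linarith [Real.exp_one_lt_d9]
      calc (k:ℝ) ^ k * (1 + 1 / k) ^ k ≤ (k:ℝ) ^ k * 3 :=
            mul_le_mul_of_nonneg_left h4 (by positivity)
        _ = 3 * (k:ℝ) ^ k := by ring
    exact_mod_cast h1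

lemma pow_le_three_pow_mul_factorial : ∀ k : ℕ, k ^ k ≤ 3 ^ k * k.factorial := by
  intro k
  induction k with
  | zero => simp
  | succ k ih =>
    calc (k + 1) ^ (k + 1) = (k + 1) ^ k * (k + 1) := by ring
      _ ≤ 3 * k ^ k * (k + 1) := Nat.mul_le_mul_right _ (succ_pow_le k)
      _ ≤ 3 * (3 ^ k * k.factorial) * (k + 1) :=
          Nat.mul_le_mul_right _ (Nat.mul_le_mul_left _ ih)
      _ = 3 ^ (k + 1) * ((k + 1) * k.factorial) := by ring
      _ = 3 ^ (k + 1) * (k + 1).factorial := by rw [Nat.factorial_succ]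

/-- real version: `(k/3)^k ≤ k!` -/
lemma factorial_lower (k : ℕ) : ((k : ℝ) / 3) ^ k ≤ (k.factorial : ℝ) := by
  rw [div_pow]
  rw [div_le_iff₀ (by positivity)]
  have := pow_le_three_pow_mul_factorial k
  have h : ((k:ℝ)) ^ k ≤ 3 ^ k * (k.factorial : ℝ) := by exact_mod_cast this
  linarith


/-- extracting a single (even-indexed) term from the `Wp` sum -/
lemma Wp_term_le (hp0 : 0 ≤ p) (hp1 : p ≤ 1) {σ i : ℕ} (k : ℕ) (hi : 2 ≤ i) (hiσ : i ≤ σ)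
    (hie : Even i) :
    (σ.choose i : ℝ) * w p i * Wp p (σ - i) k false ≤ Wp p σ (k + 1) false := by
  have hterm :
      (σ.choose i : ℝ) * v p false i * Wp p (σ - i) k (if Even i then false else !false)
        ≤ ∑ i' ∈ Icc 2 σ,
          (σ.choose i' : ℝ) * v p false i' * Wp p (σ - i') k (if Even i' then false else !false) := by
    apply Finset.single_le_sum (f := fun i' =>
      (σ.choose i' : ℝ) * v p false i' * Wp p (σ - i') k (if Even i' then false else !false))
    · intro i' hi'
      simp only [mem_Icc] at hi'
      have := v_nonneg hp0 hp1 false hi'.1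
      have := Wp_nonneg hp0 hp1 k (σ - i') (if Even i' then false else !false)
      positivity
    · exact mem_Icc.2 ⟨hi, hiσ⟩
  rw [if_pos hie] at hterm
  rw [Wp]
  have hv : v p false i = w p i := by rw [v, if_pos hie]
  rw [← hv]
  exact hterm

/-- choose lower bound in the form we need:
if `b*c ≤ 2*n` and `b ≤ n` then `(c/2)^b ≤ C(n,b)` -/
lemma choose_lower {n b c : ℕ} (hbn : b ≤ n) (h : b * c ≤ 2 * n) :
    ((c : ℝ) / 2) ^ b ≤ (n.choose b : ℝ) := by
  have h1 : n ^ b ≤ b ^ b * n.choose b := pow_le_pow_mul_choose b n hbn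
  have h2 : b ^ b * c ^ b ≤ 2 ^ b * (b ^ b * n.choose b) := by
    calc b ^ b * c ^ b = (b * c) ^ b := (mul_pow _ _ _).symm
      _ ≤ (2 * n) ^ b := Nat.pow_le_pow_left h b
      _ = 2 ^ b * n ^ b := mul_pow _ _ _
      _ ≤ 2 ^ b * (b ^ b * n.choose b) := Nat.mul_le_mul_left _ h1
    
  rcases Nat.eq_zero_or_pos b with rfl | hb
  · simp
  · have hbb : 0 < b ^ b := Nat.pow_pos hb
    have h3 : c ^ b ≤ 2 ^ b * n.choose b := by
      have := h2
      rw [show 2 ^ b * (b ^ b * n.choose b) = b ^ b * (2 ^ b * n.choose b) by ring] at this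
      exact Nat.le_of_mul_le_mul_left this hbb
    have h4 : ((c:ℝ)) ^ b ≤ 2 ^ b * (n.choose b : ℝ) := by exact_mod_cast h3
    rw [div_pow, div_le_iff₀ (by positivity)]
    calc ((c:ℝ)) ^ b ≤ 2 ^ b * (n.choose b : ℝ) := h4
      _ = (n.choose b : ℝ) * 2 ^ b := by ring

lemma W_lower (hp0 : 0 ≤ p) (hp1 : p ≤ 1) {d k : ℕ} (hd : Even d) (hk1 : 1 ≤ k)
    (hk : 2 * k ≤ d) : ((48:ℝ)⁻¹ * k) ^ d ≤ W p d k := by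
  classical
  obtain ⟨D, hD⟩ : ∃ D, d = 2 * D := by rcases hd with ⟨t, ht⟩; exact ⟨t, by omega⟩
  set A := D / k with hA
  set r := D % k with hr
  have hkD : k ≤ D := by omega
  have hA1 : 1 ≤ A := (Nat.one_le_div_iff (by omega)).2 hkD
  have hrk : r < k := Nat.mod_lt _ (by omega)
  have hDAr : D = A * k + r := by
    rw [hA, hr, Nat.mul_comm]
    exact (Nat.div_add_mod D k).symm
  -- Stage 1 : small parts
  have L1 : ∀ j : ℕ, ((j.factorial : ℝ)) ^ (2 * A) * ((2:ℝ)⁻¹) ^ (2 * A * j)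
      ≤ Wp p (2 * A * j) j false := by
    intro j
    induction j with
    | zero => simp [Wp]
    | succ j ih =>
      have hsub : 2 * A * (j + 1) - 2 * A = 2 * A * j := by
        have : 2 * A * (j + 1) = 2 * A * j + 2 * A := by ring
        omega
      have hterm := Wp_term_le hp0 hp1 (σ := 2 * A * (j + 1)) (i := 2 * A) j
        (by omega) (Nat.le_mul_of_pos_right _ (by omega)) (even_two_mul A)
      rw [hsub] at hterm
      refine le_trans ?_ hterm
      have hc : ((j + 1 : ℕ) : ℝ) ^ (2 * A) ≤ ((2 * A * (j + 1)).choose (2 * A) : ℝ) := by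
        have h := choose_lower (n := 2 * A * (j + 1)) (b := 2 * A) (c := 2 * (j + 1))
          (Nat.le_mul_of_pos_right _ (by omega)) (le_of_eq (by ring))
        calc ((j + 1 : ℕ) : ℝ) ^ (2 * A) = (((2 * (j + 1) : ℕ) : ℝ) / 2) ^ (2 * A) := by
              push_cast; ring
          _ ≤ _ := h
      have hw : ((2:ℝ)⁻¹) ^ (2 * A) ≤ w p (2 * A) :=
        w_even_lower hp0 hp1 (by omega) (even_two_mul A)
      have hWp0 : 0 ≤ Wp p (2 * A * j) j false := Wp_nonneg hp0 hp1 _ _ _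
      calc ((j + 1).factorial : ℝ) ^ (2 * A) * ((2:ℝ)⁻¹) ^ (2 * A * (j + 1))
          = ((j + 1 : ℕ) : ℝ) ^ (2 * A) * ((2:ℝ)⁻¹) ^ (2 * A)
            * ((j.factorial : ℝ) ^ (2 * A) * ((2:ℝ)⁻¹) ^ (2 * A * j)) := by
            rw [Nat.factorial_succ]
            push_cast
            rw [show 2 * A * (j + 1) = 2 * A * j + 2 * A by ring, pow_add, mul_pow]
            ring
        _ ≤ ((2 * A * (j + 1)).choose (2 * A) : ℝ) * w p (2 * A) * Wp p (2 * A * j) j false := by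
            apply mul_le_mul (mul_le_mul hc hw (by positivity) (by positivity)) ih
              (by positivity)
            exact mul_nonneg (by positivity) (le_trans (by positivity) hw)
  -- Stage 2 : big parts
  have L2 : ∀ μ : ℕ, μ ≤ r →
      ((k - r).factorial : ℝ) ^ (2 * A) * (((k - r + μ).descFactorial μ : ℝ)) ^ (2 * A + 2)
          * ((2:ℝ)⁻¹) ^ (2 * A * (k - r) + (4 * A + 4) * μ)
        ≤ Wp p (2 * A * (k - r) + (2 * A + 2) * μ) (k - r + μ) false := by
    intro μ
    induction μ with
    | zero =>
      intro _
      simp only [Nat.mul_zero, Nat.add_zero, Nat.descFactorial_zero, Nat.cast_one, one_pow,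
        mul_one]
      exact L1 (k - r)
    | succ μ ihμ =>
      intro hμr
      have ih := ihμ (by omega)
      obtain ⟨e, he⟩ : ∃ e, k - r + μ = e := ⟨k - r + μ, rfl⟩
      have hsub : 2 * A * (k - r) + (2 * A + 2) * (μ + 1) - (2 * A + 2)
          = 2 * A * (k - r) + (2 * A + 2) * μ := by
        have : (2 * A + 2) * (μ + 1) = (2 * A + 2) * μ + (2 * A + 2) := by ring
        omega
      have hcount : k - r + (μ + 1) = (k - r + μ) + 1 := by omega
      have hterm := Wp_term_le hp0 hp1
        (σ := 2 * A * (k - r) + (2 * A + 2) * (μ + 1)) (i := 2 * A + 2) (k - r + μ)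
        (by omega) (by nlinarith [Nat.zero_le (2 * A * (k - r)), hA1])
        (by exact ⟨A + 1, by ring⟩)
      rw [hsub, ← hcount] at hterm
      refine le_trans ?_ hterm
      -- choose bound
      have hc : (((k - r + μ + 1 : ℕ) : ℝ) / 2) ^ (2 * A + 2)
          ≤ (((2 * A * (k - r) + (2 * A + 2) * (μ + 1)).choose (2 * A + 2)) : ℝ) := by
        apply choose_lower
        · nlinarith [hA1]
        · -- (2A+2) * (k-r+μ+1) ≤ 2 * (2A(k-r) + (2A+2)(μ+1))
          have h1 : (2 * A + 2) * (k - r) ≤ 2 * (2 * A * (k - r)) := by nlinarith [hA1]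
          have h2 : (2 * A + 2) * (k - r + μ + 1) = (2 * A + 2) * (k - r)
              + (2 * A + 2) * (μ + 1) := by ring
          omega
      have hw : ((2:ℝ)⁻¹) ^ (2 * A + 2) ≤ w p (2 * A + 2) :=
        w_even_lower hp0 hp1 (by omega) ⟨A + 1, by ring⟩
      have hWp0 : 0 ≤ Wp p (2 * A * (k - r) + (2 * A + 2) * μ) (k - r + μ) false :=
        Wp_nonneg hp0 hp1 _ _ _
      calc ((k - r).factorial : ℝ) ^ (2 * A)
            * (((k - r + (μ + 1)).descFactorial (μ + 1) : ℝ)) ^ (2 * A + 2)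
            * ((2:ℝ)⁻¹) ^ (2 * A * (k - r) + (4 * A + 4) * (μ + 1))
          = ((((k - r + μ + 1 : ℕ) : ℝ) / 2) ^ (2 * A + 2) * ((2:ℝ)⁻¹) ^ (2 * A + 2))
            * (((k - r).factorial : ℝ) ^ (2 * A)
              * (((k - r + μ).descFactorial μ : ℝ)) ^ (2 * A + 2)
              * ((2:ℝ)⁻¹) ^ (2 * A * (k - r) + (4 * A + 4) * μ)) := by
            rw [show k - r + (μ + 1) = (k - r + μ) + 1 by omega,
              Nat.succ_descFactorial_succ]
            push_cast
            rw [show 2 * A * (k - r) + (4 * A + 4) * (μ + 1)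
              = (2 * A * (k - r) + (4 * A + 4) * μ) + ((2 * A + 2) + (2 * A + 2)) by ring]
            rw [pow_add, pow_add, mul_pow, div_pow]
            have h2 : ((2:ℝ)⁻¹) ^ (2 * A + 2) = 1 / 2 ^ (2 * A + 2) := by
              rw [inv_pow]
              ring
            rw [h2]
            simp only [one_div, inv_pow]
            ring
        _ ≤ ((((2 * A * (k - r) + (2 * A + 2) * (μ + 1)).choose (2 * A + 2)) : ℝ)
              * w p (2 * A + 2))
            * Wp p (2 * A * (k - r) + (2 * A + 2) * μ) (k - r + μ) false := by
            apply mul_le_mul (mul_le_mul hc hw (by positivity) ?_) ih ?_ ?_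
            · exact le_trans (by positivity) hc
            · positivity
            · exact mul_nonneg (le_trans (by positivity) hc) (le_trans (by positivity) hw)
        _ = (((2 * A * (k - r) + (2 * A + 2) * (μ + 1)).choose (2 * A + 2)) : ℝ)
              * w p (2 * A + 2)
              * Wp p (2 * A * (k - r) + (2 * A + 2) * μ) (k - r + μ) false := by ring
  -- take μ = r
  have e1 : (k - r) + r = k := by omega
  have htot : 2 * A * (k - r) + (2 * A + 2) * r = d := by
    calc 2 * A * (k - r) + (2 * A + 2) * r = 2 * A * ((k - r) + r) + 2 * r := by ring
      _ = 2 * A * k + 2 * r := by rw [e1]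
      _ = 2 * (A * k + r) := by ring
      _ = 2 * D := by rw [hDAr]
      _ = d := hD.symm
  have hfinal := L2 r le_rfl
  rw [e1, htot] at hfinal
  -- identify the factorial product
  have hnat : (k - r).factorial * k.descFactorial r = k.factorial := by
    rw [Nat.descFactorial_eq_factorial_mul_choose,
      ← Nat.choose_mul_factorial_mul_factorial (le_of_lt hrk)]
    ring
  have hprod : ((k - r).factorial : ℝ) ^ (2 * A) * ((k.descFactorial r : ℝ)) ^ (2 * A + 2)
      = (k.factorial : ℝ) ^ (2 * A) * (k.descFactorial r : ℝ) ^ 2 := by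
    have hcast : ((k - r).factorial : ℝ) * (k.descFactorial r : ℝ) = (k.factorial : ℝ) := by
      rw [← Nat.cast_mul, hnat]
    calc ((k - r).factorial : ℝ) ^ (2 * A) * ((k.descFactorial r : ℝ)) ^ (2 * A + 2)
        = (((k - r).factorial : ℝ) * (k.descFactorial r : ℝ)) ^ (2 * A)
          * (k.descFactorial r : ℝ) ^ 2 := by
          rw [mul_pow, pow_add]
          ring
      _ = (k.factorial : ℝ) ^ (2 * A) * (k.descFactorial r : ℝ) ^ 2 := by rw [hcast]
  rw [hprod] at hfinal
  -- lower bounds for the numeric quantities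
  have hdesc : ((k : ℝ) / 6) ^ r ≤ (k.descFactorial r : ℝ) := by
    rcases le_or_gt (2 * r) k with hcase | hcase
    · have h1 : (k + 1 - r) ^ r ≤ k.descFactorial r := Nat.pow_sub_le_descFactorial k r
      have h2 : ((k : ℝ) / 6) ^ r ≤ ((k + 1 - r : ℕ) : ℝ) ^ r := by
        apply pow_le_pow_left₀ (by positivity)
        rw [Nat.cast_sub (by omega)]
        push_cast
        have : (2 * r : ℝ) ≤ k := by exact_mod_cast hcase
        linarith
      exact h2.trans (by exact_mod_cast h1)
    · have h1 : r.factorial ≤ k.descFactorial r := by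
        rw [Nat.descFactorial_eq_factorial_mul_choose]
        exact Nat.le_mul_of_pos_right _ (Nat.choose_pos (le_of_lt hrk))
      have h2 : ((r : ℝ) / 3) ^ r ≤ (r.factorial : ℝ) := factorial_lower r
      have h3 : ((k : ℝ) / 6) ^ r ≤ ((r : ℝ) / 3) ^ r := by
        apply pow_le_pow_left₀ (by positivity)
        have : (k : ℝ) < 2 * r := by exact_mod_cast hcase
        linarith
      exact h3.trans (h2.trans (by exact_mod_cast h1))
  have hfact : ((k : ℝ) / 3) ^ k ≤ (k.factorial : ℝ) := factorial_lower k
  have hE : 2 * A * (k - r) + (4 * A + 4) * r ≤ 2 * d := by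
    have h2 : (4 * A + 4) * r = (2 * A + 2) * r + (2 * A + 2) * r := by ring
    omega
  have e2 : 2 * A * k + 2 * r = d := by
    calc 2 * A * k + 2 * r = 2 * (A * k + r) := by ring
      _ = 2 * D := by rw [hDAr]
      _ = d := hD.symm
  -- final chain
  rw [W_eq_Wp_false hd]
  have hk0 : (0:ℝ) ≤ (k : ℝ) := Nat.cast_nonneg k
  calc ((48:ℝ)⁻¹ * k) ^ d
      ≤ ((k : ℝ) / 6 * ((2:ℝ)⁻¹) ^ 2) ^ d := by
        apply pow_le_pow_left₀ (by positivity)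
        rw [show ((2:ℝ)⁻¹) ^ 2 = 4⁻¹ by norm_num]
        rw [div_mul_eq_mul_div, mul_comm]
        rw [le_div_iff₀ (by norm_num)]
        nlinarith [hk0]
    _ = ((k : ℝ) / 6) ^ d * ((2:ℝ)⁻¹) ^ (2 * d) := by
        rw [mul_pow, ← pow_mul]
    _ = ((k : ℝ) / 6) ^ (2 * A * k) * ((k : ℝ) / 6) ^ (2 * r) * ((2:ℝ)⁻¹) ^ (2 * d) := by
        rw [← pow_add, e2]
    _ ≤ (((k : ℝ) / 3) ^ k) ^ (2 * A) * (((k : ℝ) / 6) ^ r) ^ 2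
          * ((2:ℝ)⁻¹) ^ (2 * A * (k - r) + (4 * A + 4) * r) := by
        have b1 : ((k : ℝ) / 6) ^ (2 * A * k) ≤ (((k : ℝ) / 3) ^ k) ^ (2 * A) := by
          rw [← pow_mul]
          rw [show k * (2 * A) = 2 * A * k by ring]
          apply pow_le_pow_left₀ (by positivity)
          linarith
        have b2 : (((k : ℝ) / 6) ^ r) ^ 2 = ((k : ℝ) / 6) ^ (2 * r) := by
          rw [← pow_mul]
          ring_nf
        have b3 : ((2:ℝ)⁻¹) ^ (2 * d) ≤ ((2:ℝ)⁻¹) ^ (2 * A * (k - r) + (4 * A + 4) * r) :=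
          pow_le_pow_of_le_one (by norm_num) (by norm_num) hE
        rw [b2]
        apply mul_le_mul (mul_le_mul b1 le_rfl (by positivity) (by positivity)) b3
          (by positivity) (by positivity)
    _ ≤ (k.factorial : ℝ) ^ (2 * A) * (k.descFactorial r : ℝ) ^ 2
          * ((2:ℝ)⁻¹) ^ (2 * A * (k - r) + (4 * A + 4) * r) := by
        apply mul_le_mul _ le_rfl (by positivity) (by positivity)
        apply mul_le_mul (pow_le_pow_left₀ (by positivity) hfact _)
          (pow_le_pow_left₀ (by positivity) hdesc _) (by positivity) (by positivity)
    _ ≤ Wp p d k false := hfinal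

end CMLB

/-- there is a universal constant c > 0 such that, for even d ≥ 2,
the d-th central binomial moment is bounded below by
∑_{k=1}^{⌊d/2⌋} C(n,k) (pq)^k (c k)^d. -/
theorem central_moment_lower_bound :
    ∃ c : ℝ, 0 < c ∧ ∀ (n : ℕ) (p : ℝ), 0 ≤ p → p ≤ 1 →
      ∀ d : ℕ, Even d → 2 ≤ d →
      ∑ k ∈ Finset.Icc 1 (d / 2),
          (n.choose k : ℝ) * (p * (1 - p)) ^ k * (c * k) ^ d ≤
      ∑ j ∈ Finset.range (n + 1),
          (n.choose j : ℝ) * p ^ j * (1 - p) ^ (n - j) * ((j : ℝ) - n * p) ^ d := by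
  refine ⟨(48:ℝ)⁻¹, by norm_num, ?_⟩
  intro n p hp0 hp1 d hd hd2
  have key : (∑ j ∈ Finset.range (n + 1),
      (n.choose j : ℝ) * p ^ j * (1 - p) ^ (n - j) * ((j : ℝ) - n * p) ^ d)
      = ∑ k ∈ Finset.range (d + 1), (n.choose k : ℝ) * (p * (1 - p)) ^ k * CMLB.W p d k :=
    CMLB.M_eq n d
  rw [key]
  have hsub : Finset.Icc 1 (d / 2) ⊆ Finset.range (d + 1) := by
    intro k hk
    simp only [Finset.mem_Icc] at hk
    exact Finset.mem_range.2 (lt_of_le_of_lt (hk.2.trans (Nat.div_le_self d 2)) (Nat.lt_succ_self d))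
  have hnonneg : ∀ k ∈ Finset.range (d + 1),
      0 ≤ (n.choose k : ℝ) * (p * (1 - p)) ^ k * CMLB.W p d k := by
    intro k _
    have h1 : (0:ℝ) ≤ p * (1 - p) := mul_nonneg hp0 (by linarith)
    have h2 : 0 ≤ CMLB.W p d k := by
      rw [CMLB.W_eq_Wp_false hd]
      exact CMLB.Wp_nonneg hp0 hp1 k d false
    positivity
  refine le_trans (Finset.sum_le_sum ?_)
    (Finset.sum_le_sum_of_subset_of_nonneg hsub (fun k hk _ => hnonneg k hk))
  intro k hk
  simp only [Finset.mem_Icc] at hk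
  have hkd : 2 * k ≤ d := by
    have := hk.2
    omega
  have hW := CMLB.W_lower hp0 hp1 hd hk.1 hkd
  have h1 : (0:ℝ) ≤ p * (1 - p) := mul_nonneg hp0 (by linarith)
  have h2 : (0:ℝ) ≤ (n.choose k : ℝ) * (p * (1 - p)) ^ k := by positivity
  exact mul_le_mul_of_nonneg_left hW h2
end

section
/- For every natural number n, every real p, real q, and every natural number d ≥ 1, the d-th power moment of a sum of n independent Bernoulli(p) variables expands as ∑_{j=0}^{n} C(n,j) p^j (1−p)^{n−j} j^d = ∑_{k=0}^{d} C(n,k) p^k · ∑_{(d_1,…,d_k), each d_i ≥ 1, d_1+⋯+d_k = d} C(d; d_1,…,d_k), where the inner sum ranges over ordered k-tuples of positive integers summing to d. -/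
open Finset Nat

private def Apos (d k : ℕ) : ℕ :=
  ∑ f ∈ (Finset.Nat.antidiagonalTuple k d).filter (fun f => ∀ i, 1 ≤ f i),
    Nat.multinomial Finset.univ f

private lemma Apos_eq_zero {d k : ℕ} (h : d < k) : Apos d k = 0 := by
  rw [Apos, Finset.filter_eq_empty_iff.2, Finset.sum_empty]
  intro f hf hpos
  rw [Finset.Nat.mem_antidiagonalTuple] at hf
  have hk : k ≤ d := by
    calc k = ∑ _i : Fin k, 1 := by simp
    _ ≤ ∑ i, f i := Finset.sum_le_sum fun i _ => hpos i
    _ = d := hf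
  omega

private lemma inner_eq {j : ℕ} (d : ℕ) (t : Finset (Fin j)) :
    ∑ g ∈ (Finset.piAntidiag Finset.univ d).filter
        (fun g => (Finset.univ.filter fun i => g i ≠ 0) = t), Nat.multinomial Finset.univ g
    = Apos d t.card := by
  set e := t.equivFin with he
  have hsrc : ∀ g, g ∈ (Finset.piAntidiag (Finset.univ : Finset (Fin j)) d).filter
      (fun g => (Finset.univ.filter fun i => g i ≠ 0) = t) →
      (∑ x, g x = d) ∧ ∀ x, g x ≠ 0 ↔ x ∈ t := by
    intro g hg
    rw [Finset.mem_filter, Finset.mem_piAntidiag] at hg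
    refine ⟨hg.1.1, fun x => ?_⟩
    rw [← hg.2, Finset.mem_filter]
    simp
  rw [Apos]
  refine Finset.sum_nbij' (fun g a => g (e.symm a))
    (fun f x => if h : x ∈ t then f (e ⟨x, h⟩) else 0) ?_ ?_ ?_ ?_ ?_
  · intro g hg
    obtain ⟨hsum, hsupp⟩ := hsrc g hg
    rw [Finset.mem_filter, Finset.Nat.mem_antidiagonalTuple]
    constructor
    · calc ∑ a, g ((e.symm a : t) : Fin j) = ∑ x : t, g x := Equiv.sum_comp e.symm (fun x : {x // x ∈ t} => g ↑x)
      _ = ∑ x ∈ t, g x := Finset.sum_coe_sort t g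
      _ = ∑ x, g x := Finset.sum_subset (Finset.subset_univ t)
          (fun x _ hx => by
            by_contra h
            exact hx ((hsupp x).1 h))
      _ = d := hsum
    · intro a
      have h2 := (hsupp ((e.symm a : t) : Fin j)).2 (e.symm a).2
      exact Nat.one_le_iff_ne_zero.2 h2
  · intro f hf
    rw [Finset.mem_filter, Finset.Nat.mem_antidiagonalTuple] at hf
    rw [Finset.mem_filter, Finset.mem_piAntidiag]
    refine ⟨⟨?_, fun i _ => Finset.mem_univ i⟩, ?_⟩
    · calc ∑ x, (if h : x ∈ t then f (e ⟨x, h⟩) else 0)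
          = ∑ x ∈ t, (if h : x ∈ t then f (e ⟨x, h⟩) else 0) :=
        (Finset.sum_subset (Finset.subset_univ t)
          (fun x _ hx => by rw [dif_neg hx])).symm
      _ = ∑ x ∈ t.attach, (if h : (x : Fin j) ∈ t then f (e ⟨x, h⟩) else 0) :=
        (Finset.sum_attach t _).symm
      _ = ∑ x : t, f (e x) := by
        refine Finset.sum_congr rfl fun x _ => ?_
        rw [dif_pos x.2]
      _ = ∑ a, f a := Equiv.sum_comp e f
      _ = d := hf.1
    · ext x
      simp only [Finset.mem_filter, Finset.mem_univ, true_and]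
      constructor
      · intro hx
        by_contra h
        rw [dif_neg h] at hx
        exact hx rfl
      · intro hx
        rw [dif_pos hx]
        have := hf.2 (e ⟨x, hx⟩)
        omega
  · intro g hg
    obtain ⟨_, hsupp⟩ := hsrc g hg
    funext x
    dsimp only
    by_cases h : x ∈ t
    · rw [dif_pos h, Equiv.symm_apply_apply]
    · rw [dif_neg h]
      have := (hsupp x).2
      by_contra hne
      exact h (((hsupp x)).1 (fun h0 => hne h0.symm))
  · intro f hf
    funext a
    dsimp only
    rw [dif_pos (e.symm a).2]
    congr 1
    rw [Subtype.coe_eta, Equiv.apply_symm_apply]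
  · intro g hg
    obtain ⟨hsum, hsupp⟩ := hsrc g hg
    have hs2 : ∑ a, g ((e.symm a : t) : Fin j) = d := by
      calc ∑ a, g ((e.symm a : t) : Fin j) = ∑ x : t, g x := Equiv.sum_comp e.symm (fun x : {x // x ∈ t} => g ↑x)
      _ = ∑ x ∈ t, g x := Finset.sum_coe_sort t g
      _ = ∑ x, g x := Finset.sum_subset (Finset.subset_univ t)
          (fun x _ hx => by by_contra h; exact hx ((hsupp x).1 h))
      _ = d := hsum
    have hp : ∏ x, (g x)! = ∏ a, (g ((e.symm a : t) : Fin j))! := by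
      calc ∏ x, (g x)! = ∏ x ∈ t, (g x)! :=
        (Finset.prod_subset (Finset.subset_univ t)
          (fun x _ hx => by
            have : g x = 0 := by by_contra h; exact hx ((hsupp x).1 h)
            rw [this]; rfl)).symm
      _ = ∏ x : t, (g (x : Fin j))! := (Finset.prod_coe_sort t _).symm
      _ = ∏ a, (g ((e.symm a : t) : Fin j))! := (Equiv.prod_comp e.symm _).symm
    simp only [Nat.multinomial]
    rw [hsum, hs2, hp]

private lemma key (j d : ℕ) :
    j ^ d = ∑ k ∈ Finset.range (d + 1), j.choose k * Apos d k := by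
  have h1 : (j : ℕ) ^ d = ∑ g ∈ Finset.piAntidiag (Finset.univ : Finset (Fin j)) d,
      Nat.multinomial Finset.univ g := by
    have := Finset.sum_pow_eq_sum_piAntidiag (Finset.univ : Finset (Fin j)) (fun _ => (1 : ℕ)) d
    simpa using this
  rw [h1, ← Finset.sum_fiberwise_of_maps_to
      (g := fun g : Fin j → ℕ => Finset.univ.filter fun i => g i ≠ 0)
      (t := (Finset.univ : Finset (Fin j)).powerset)
      (fun g _ => Finset.mem_powerset.2 (Finset.filter_subset _ _)) _,
    Finset.sum_congr rfl (fun t _ => inner_eq d t),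
    Finset.sum_powerset_apply_card (Apos d)]
  simp only [Finset.card_univ, Fintype.card_fin, smul_eq_mul]
  have e1 : ∑ m ∈ Finset.range (j + 1), j.choose m * Apos d m
      = ∑ m ∈ Finset.range (j + d + 2), j.choose m * Apos d m :=
    Finset.sum_subset (Finset.range_subset_range.2 (by omega))
      (fun k _ hk => by
        have : j < k := by simp only [Finset.mem_range] at hk; omega
        rw [Nat.choose_eq_zero_of_lt this, Nat.zero_mul])
  have e2 : ∑ m ∈ Finset.range (d + 1), j.choose m * Apos d m
      = ∑ m ∈ Finset.range (j + d + 2), j.choose m * Apos d m :=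
    Finset.sum_subset (Finset.range_subset_range.2 (by omega))
      (fun k _ hk => by
        have : d < k := by simp only [Finset.mem_range] at hk; omega
        rw [Apos_eq_zero this, Nat.mul_zero])
  rw [e1, ← e2]

private lemma lemB (n k : ℕ) (p : ℝ) :
    ∑ j ∈ Finset.range (n + 1),
      (n.choose j : ℝ) * (j.choose k : ℝ) * (p ^ j * (1 - p) ^ (n - j))
    = (n.choose k : ℝ) * p ^ k := by
  by_cases hk : k ≤ n
  · rw [← Finset.sum_subset
      (show Finset.Ico k (n + 1) ⊆ Finset.range (n + 1) from fun x hx => by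
        simp only [Finset.mem_Ico] at hx
        simp only [Finset.mem_range]; omega)
      (fun x hx hx' => by
        have : x < k := by
          simp only [Finset.mem_range] at hx
          simp only [Finset.mem_Ico] at hx'
          omega
        rw [Nat.choose_eq_zero_of_lt this]
        push_cast; ring)]
    rw [Finset.sum_Ico_eq_sum_range]
    have hrange : n + 1 - k = n - k + 1 := by omega
    rw [hrange]
    have hterm : ∀ i ∈ Finset.range (n - k + 1),
        (n.choose (k + i) : ℝ) * ((k + i).choose k : ℝ) * (p ^ (k + i) * (1 - p) ^ (n - (k + i)))
        = (n.choose k : ℝ) * p ^ k * (p ^ i * (1 - p) ^ (n - k - i) * ((n - k).choose i : ℝ)) := by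
      intro i hi
      have hi' : i ≤ n - k := by
        simp only [Finset.mem_range] at hi; omega
      have hc : (n.choose (k + i)) * ((k + i).choose k) = n.choose k * ((n - k).choose i) := by
        have h := Nat.choose_mul (n := n) (k := k + i) (s := k) (by omega)
        simpa using h
      have hsub : n - (k + i) = n - k - i := by omega
      have hcc : ((n.choose (k + i)) : ℝ) * ((k + i).choose k : ℝ)
          = (n.choose k : ℝ) * ((n - k).choose i : ℝ) := by exact_mod_cast congrArg (Nat.cast (R := ℝ)) hc
      rw [hsub, pow_add]
      calc (n.choose (k + i) : ℝ) * ((k + i).choose k : ℝ) * (p ^ k * p ^ i * (1 - p) ^ (n - k - i))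
          = (n.choose k : ℝ) * ((n - k).choose i : ℝ) * (p ^ k * p ^ i * (1 - p) ^ (n - k - i)) := by
            rw [hcc]
        _ = _ := by ring
    rw [Finset.sum_congr rfl hterm, ← Finset.mul_sum, ← add_pow]
    norm_num
  · rw [Nat.choose_eq_zero_of_lt (by omega : n < k)]
    rw [Finset.sum_eq_zero, Nat.cast_zero, zero_mul]
    intro j hj
    have : j < k := by simp only [Finset.mem_range] at hj; omega
    rw [Nat.choose_eq_zero_of_lt this]
    push_cast; ring

/-- the d-th raw binomial moment expands as a sum over k and over
ordered k-tuples of positive parts summing to d of multinomial coefficients. -/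
theorem binom_raw_moment_multinomial (n : ℕ) (p q : ℝ) (d : ℕ) (hd : 1 ≤ d) :
    ∑ j ∈ Finset.range (n + 1),
        (n.choose j : ℝ) * p ^ j * (1 - p) ^ (n - j) * (j : ℝ) ^ d =
    ∑ k ∈ Finset.range (d + 1),
      (n.choose k : ℝ) * p ^ k *
        ∑ f ∈ (Finset.Nat.antidiagonalTuple k d).filter (fun f => ∀ i, 1 ≤ f i),
          (Nat.multinomial Finset.univ f : ℝ) := by
  have hA : ∀ j : ℕ, ((j : ℝ)) ^ d
      = ∑ k ∈ Finset.range (d + 1), (j.choose k : ℝ) * (Apos d k : ℝ) := by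
    intro j
    calc ((j : ℝ)) ^ d = ((j ^ d : ℕ) : ℝ) := by push_cast; ring
    _ = _ := by rw [key j d]; push_cast; ring
  have hcast : ∀ k, ((Apos d k : ℕ) : ℝ)
      = ∑ f ∈ (Finset.Nat.antidiagonalTuple k d).filter (fun f => ∀ i, 1 ≤ f i),
          (Nat.multinomial Finset.univ f : ℝ) := by
    intro k; rw [Apos]; push_cast; rfl
  have step1 : ∑ j ∈ Finset.range (n + 1),
        (n.choose j : ℝ) * p ^ j * (1 - p) ^ (n - j) * (j : ℝ) ^ d
      = ∑ j ∈ Finset.range (n + 1), ∑ k ∈ Finset.range (d + 1),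
        (n.choose j : ℝ) * (j.choose k : ℝ) * (p ^ j * (1 - p) ^ (n - j)) * (Apos d k : ℝ) := by
    refine Finset.sum_congr rfl fun j _ => ?_
    rw [hA j, Finset.mul_sum]
    refine Finset.sum_congr rfl fun k _ => ?_
    ring
  rw [step1, Finset.sum_comm]
  refine Finset.sum_congr rfl fun k _ => ?_
  rw [← Finset.sum_mul, lemB n k p, hcast k]
end
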